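/- arXiv:1612.06898 — 6 statements merged into one kernel-verified Lean document; each statement's English description precedes it below -/
import Mathlib

section
/- Let $n \geq 2$ and $N = 2^n - 1$. For $h \in \{1,\dots,N\}$ write $h = \sum_{j=1}^n \varepsilon_j(h) 2^{j-1}$ with $\varepsilon_j(h) \in \{0,1\}$, and say $h \preceq \ell$ if $\varepsilon_j(h) \leq \varepsilon_j(\ell)$ for all $j$. Call an $N$-tuple $(z_1,\dots,z_N)$ of positive integers reduced if $\gcd(z_h, z_\ell) = 1$ whenever $h \not\preceq \ell$ and $\ell \not\preceq h$. Then the map sending a reduced $N$-tuple $(z_1,\dots,z_N)$ to $(y_1,\dots,y_n)$ where $y_j = \prod_{h=1}^N z_h^{\varepsilon_j(h)}$ is a bijection from the set of reduced $N$-tuples of positive integers onto the set of $n$-tuples of positive integers. -/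
/-- `j`-th binary digit (zero-based) of `h`, as `0` or `1`; `epsb h (j-1)` is the
paper's `ε_j(h)`. -/
def epsb (h j : ℕ) : ℕ := if h.testBit j then 1 else 0

/-- Domination order: every binary digit of `h` (among the first `n`) is at most that of `ℓ`. -/
def Dom (n h ℓ : ℕ) : Prop := ∀ j < n, epsb h j ≤ epsb ℓ j

/-- A tuple indexed by `Fin (2^n - 1)` (index `h` standing for `h+1 ∈ {1,…,2^n-1}`)
is reduced if entries at incomparable indices are coprime. -/
def Reduced (n : ℕ) (z : Fin (2^n - 1) → ℕ) : Prop :=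
  ∀ h ℓ : Fin (2^n - 1), ¬ Dom n (h.1+1) (ℓ.1+1) → ¬ Dom n (ℓ.1+1) (h.1+1) →
    Nat.gcd (z h) (z ℓ) = 1

namespace Stmt0
open Finset

variable {n : ℕ}

/-- set of bits of `m` among the first `n`. -/
def bs (n m : ℕ) : Finset (Fin n) := univ.filter (fun j => m.testBit j.1)

lemma mem_bs {m : ℕ} {j : Fin n} : j ∈ bs n m ↔ m.testBit j.1 := by simp [bs]

lemma bs_inj {m₁ m₂ : ℕ} (h₁ : m₁ < 2^n) (h₂ : m₂ < 2^n) (h : bs n m₁ = bs n m₂) :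
    m₁ = m₂ := by
  apply Nat.eq_of_testBit_eq
  intro i
  by_cases hi : i < n
  · have := Finset.ext_iff.mp h ⟨i, hi⟩
    simp only [mem_bs] at this
    by_cases hb : m₁.testBit i
    · rw [hb, (this.mp hb)]
    · rcases hb2 : m₂.testBit i with _ | _
      · simpa using hb
      · exact absurd (this.mpr hb2) hb
  · rw [Nat.testBit_lt_two_pow, Nat.testBit_lt_two_pow] <;>
      exact lt_of_lt_of_le (by assumption) (Nat.pow_le_pow_right (by norm_num) (le_of_not_gt hi))

lemma bs_nonempty {m : ℕ} (h0 : m ≠ 0) (h1 : m < 2^n) : (bs n m).Nonempty := by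
  by_contra h
  apply h0
  apply Nat.eq_of_testBit_eq
  intro i
  rw [Nat.zero_testBit]
  by_cases hi : i < n
  · by_contra hb
    exact h ⟨⟨i, hi⟩, mem_bs.mpr (by simpa using hb)⟩
  · exact Nat.testBit_lt_two_pow
      (lt_of_lt_of_le h1 (Nat.pow_le_pow_right (by norm_num) (le_of_not_gt hi)))

lemma succ_lt (h : Fin (2^n - 1)) : h.1 + 1 < 2^n := by
  have := h.2
  have h2 : 1 ≤ 2^n := Nat.one_le_two_pow
  omega

lemma dom_iff {m₁ m₂ : ℕ} : Dom n m₁ m₂ ↔ bs n m₁ ⊆ bs n m₂ := by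
  constructor
  · intro hd j hj
    rw [mem_bs] at hj ⊢
    have := hd j.1 j.2
    by_cases hb : m₂.testBit j.1
    · exact hb
    · simp [epsb, hj, hb] at this
  · intro hsub j hjn
    by_cases hb : m₁.testBit j
    · have : (⟨j, hjn⟩ : Fin n) ∈ bs n m₂ := hsub (mem_bs.mpr hb)
      rw [mem_bs] at this
      simp [epsb, hb, this]
    · simp [epsb, hb]

lemma exists_bs (E : Finset (Fin n)) (hE : E.Nonempty) :
    ∃! h : Fin (2^n - 1), bs n (h.1 + 1) = E := by
  have hcard : Fintype.card {E : Finset (Fin n) // ¬ E = ∅} = 2^n - 1 := by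
    rw [Fintype.card_subtype_compl]
    simp [Fintype.card_subtype_eq (∅ : Finset (Fin n))]
  let f : Fin (2^n - 1) → {E : Finset (Fin n) // ¬ E = ∅} :=
    fun h => ⟨bs n (h.1 + 1), (bs_nonempty (by omega) (succ_lt h)).ne_empty⟩
  have hinj : Function.Injective f := by
    intro h₁ h₂ hh
    have := bs_inj (succ_lt h₁) (succ_lt h₂) (congrArg Subtype.val hh)
    exact Fin.ext (by omega)
  have hbij : Function.Bijective f :=
    (Fintype.bijective_iff_injective_and_card f).mpr ⟨hinj, by simp [hcard]⟩
  obtain ⟨h, hh⟩ := hbij.2 ⟨E, hE.ne_empty⟩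
  refine ⟨h, congrArg Subtype.val hh, fun h' hh' => ?_⟩
  exact hinj (Subtype.ext (hh'.trans (congrArg Subtype.val hh).symm))


def lev (a : Fin n → ℕ) (t : ℕ) : Finset (Fin n) := univ.filter (fun j => t ≤ a j)

lemma mem_lev {a : Fin n → ℕ} {t : ℕ} {j : Fin n} : j ∈ lev a t ↔ t ≤ a j := by simp [lev]

lemma lev_anti {a : Fin n → ℕ} {t t' : ℕ} (h : t ≤ t') : lev a t' ⊆ lev a t :=
  fun j hj => mem_lev.mpr (le_trans h (mem_lev.mp hj))

lemma lev_eq_iff {a : Fin n → ℕ} {S : Finset (Fin n)} (hS : S.Nonempty) {t : ℕ} :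
    (1 ≤ t ∧ lev a t = S) ↔ (Sᶜ.sup a < t ∧ t ≤ S.inf' hS a) := by
  constructor
  · rintro ⟨h1, rfl⟩
    refine ⟨?_, Finset.le_inf' _ _ (fun j hj => mem_lev.mp hj)⟩
    rw [Finset.sup_lt_iff (by simp only [bot_eq_zero]; omega : (⊥ : ℕ) < t)]
    intro j hj
    have : j ∉ lev a t := by simpa using hj
    rw [mem_lev] at this; omega
  · rintro ⟨h1, h2⟩
    refine ⟨by omega, ?_⟩
    ext j
    rw [mem_lev]
    constructor
    · intro hta
      by_contra hj
      have : a j ≤ Sᶜ.sup a := Finset.le_sup (by simpa using hj)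
      omega
    · intro hj
      exact le_trans h2 (Finset.inf'_le _ hj)

lemma lev_card {a : Fin n → ℕ} {S : Finset (Fin n)} (hS : S.Nonempty) {M : ℕ}
    (hM : ∀ j, a j ≤ M) :
    ((Finset.Icc 1 M).filter (fun t => lev a t = S)).card = S.inf' hS a - Sᶜ.sup a := by
  rw [← Nat.card_Ioc]
  congr 1
  ext t
  simp only [mem_filter, mem_Icc, mem_Ioc]
  constructor
  · rintro ⟨⟨h1, _⟩, h3⟩
    exact (lev_eq_iff hS).mp ⟨h1, h3⟩
  · intro h
    have h2 := (lev_eq_iff hS).mpr h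
    obtain ⟨j, hj⟩ := hS
    have htM : t ≤ M := le_trans (le_trans h.2 (Finset.inf'_le _ hj)) (hM j)
    exact ⟨⟨h2.1, htM⟩, h2.2⟩


def canonC (a : Fin n → ℕ) (h : Fin (2^n - 1)) : ℕ :=
  (bs n (h.1 + 1)).inf' (bs_nonempty (by omega) (succ_lt h)) a - ((bs n (h.1 + 1))ᶜ).sup a

lemma canonC_card (a : Fin n → ℕ) (h : Fin (2^n - 1)) {M : ℕ} (hM : ∀ j, a j ≤ M) :
    canonC a h = ((Finset.Icc 1 M).filter (fun t => lev a t = bs n (h.1 + 1))).card :=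
  (lev_card (bs_nonempty (by omega) (succ_lt h)) hM).symm

lemma canonC_levex {a : Fin n → ℕ} {h : Fin (2^n - 1)} (hc : canonC a h ≠ 0) :
    ∃ t, lev a t = bs n (h.1 + 1) := by
  unfold canonC at hc
  set hne := bs_nonempty (m := h.1 + 1) (n := n) (by omega) (succ_lt h)
  refine ⟨(bs n (h.1 + 1)).inf' hne a, ((lev_eq_iff hne).mpr ⟨by omega, le_refl _⟩).2⟩

lemma canonC_marginal (a : Fin n → ℕ) (j : Fin n) :
    ∑ h : Fin (2^n - 1), (if (h.1 + 1).testBit j.1 then canonC a h else 0) = a j := by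
  classical
  set M := Finset.univ.sup a with hMdef
  have hM : ∀ j, a j ≤ M := fun j => Finset.le_sup (mem_univ j)
  calc ∑ h : Fin (2^n - 1), (if (h.1 + 1).testBit j.1 then canonC a h else 0)
      = ∑ h : Fin (2^n - 1),
          ((Finset.Icc 1 M).filter
            (fun t => lev a t = bs n (h.1 + 1) ∧ j ∈ lev a t)).card := by
        refine Finset.sum_congr rfl (fun h _ => ?_)
        by_cases hb : (h.1 + 1).testBit j.1
        · rw [if_pos hb, canonC_card a h hM]
          congr 1
          ext t
          simp only [mem_filter, and_congr_right_iff]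
          intro _ 
          constructor
          · rintro hl
            exact ⟨hl, hl ▸ mem_bs.mpr hb⟩
          · rintro ⟨hl, _⟩
            exact hl
        · rw [if_neg hb]
          symm
          rw [Finset.card_eq_zero, Finset.filter_eq_empty_iff]
          rintro t _ ⟨hl, hjl⟩
          exact hb (mem_bs.mp (hl ▸ hjl))
    _ = ∑ h : Fin (2^n - 1), ∑ t ∈ Finset.Icc 1 M,
          (if (lev a t = bs n (h.1 + 1) ∧ j ∈ lev a t) then 1 else 0) := by
        refine Finset.sum_congr rfl (fun h _ => ?_)
        rw [Finset.card_filter]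
    _ = ∑ t ∈ Finset.Icc 1 M, ∑ h : Fin (2^n - 1),
          (if (lev a t = bs n (h.1 + 1) ∧ j ∈ lev a t) then 1 else 0) := Finset.sum_comm
    _ = ∑ t ∈ Finset.Icc 1 M, (if j ∈ lev a t then 1 else 0) := by
        refine Finset.sum_congr rfl (fun t _ => ?_)
        by_cases hj : j ∈ lev a t
        · obtain ⟨h₀, hh₀, huniq⟩ := exists_bs (lev a t) ⟨j, hj⟩
          rw [if_pos hj, Finset.sum_eq_single h₀]
          · rw [if_pos ⟨hh₀.symm, hj⟩]
          · intro h _ hne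
            rw [if_neg]
            rintro ⟨h1, -⟩
            exact hne (huniq h h1.symm)
          · intro habs
            exact absurd (mem_univ h₀) habs
        · rw [if_neg hj]
          refine Finset.sum_eq_zero (fun h _ => ?_)
          rw [if_neg]
          rintro ⟨-, h2⟩
          exact hj h2
    _ = ((Finset.Icc 1 M).filter (fun t => j ∈ lev a t)).card := by
        rw [Finset.card_filter]
    _ = (Finset.Icc 1 (a j)).card := by
        congr 1
        ext t
        simp only [mem_filter, mem_Icc, mem_lev]
        have := hM j
        omega
    _ = a j := by simp

lemma canonC_unique (c : Fin (2^n - 1) → ℕ)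
    (hchain : ∀ h ℓ, 0 < c h → 0 < c ℓ →
      bs n (h.1 + 1) ⊆ bs n (ℓ.1 + 1) ∨ bs n (ℓ.1 + 1) ⊆ bs n (h.1 + 1))
    (a : Fin n → ℕ)
    (ha : ∀ j, a j = ∑ h : Fin (2^n - 1), (if (h.1 + 1).testBit j.1 then c h else 0)) :
    ∀ h, c h = canonC a h := by
  classical
  set M := ∑ h : Fin (2^n - 1), c h with hMdef
  have hM : ∀ j, a j ≤ M := by
    intro j
    rw [ha j]
    refine Finset.sum_le_sum (fun h _ => ?_)
    split <;> omega
  set count : Fin (2^n - 1) → ℕ :=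
    fun h => ((Finset.Icc 1 M).filter (fun t => lev a t = bs n (h.1 + 1))).card with hcount
  have step1 : ∀ h₀, c h₀ ≤ count h₀ := by
    intro h₀
    by_cases hc : c h₀ = 0
    · omega
    set B₀ := bs n (h₀.1 + 1) with hB₀
    set D := ∑ h : Fin (2^n - 1), (if B₀ ⊆ bs n (h.1 + 1) then c h else 0) with hD
    have hD1 : c h₀ ≤ D := by
      have := Finset.single_le_sum
        (f := fun h : Fin (2^n - 1) => if B₀ ⊆ bs n (h.1 + 1) then c h else 0)
        (fun h _ => by positivity) (mem_univ h₀)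
      rw [if_pos (subset_refl _)] at this
      exact this
    have hD2 : D ≤ M := by
      refine Finset.sum_le_sum (fun h _ => ?_)
      split <;> omega
    have hin : ∀ j ∈ B₀, D ≤ a j := by
      intro j hj
      rw [ha j]
      refine Finset.sum_le_sum (fun h _ => ?_)
      by_cases hsub : B₀ ⊆ bs n (h.1 + 1)
      · rw [if_pos hsub, if_pos (mem_bs.mp (hsub hj))]
      · rw [if_neg hsub]
        exact Nat.zero_le _
    have hout : ∀ j ∉ B₀, a j + c h₀ ≤ D := by
      intro j hj
      rw [ha j]
      have key : (∑ h : Fin (2^n - 1), (if (h.1 + 1).testBit j.1 then c h else 0)) + c h₀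
          = ∑ h : Fin (2^n - 1),
              ((if (h.1 + 1).testBit j.1 then c h else 0) + (if h = h₀ then c h₀ else 0)) := by
        rw [Finset.sum_add_distrib, Finset.sum_ite_eq' Finset.univ h₀]
        simp
      rw [key]
      refine Finset.sum_le_sum (fun h _ => ?_)
      by_cases hh : h = h₀
      · subst hh
        rw [if_neg (fun hb => hj (mem_bs.mpr hb)), if_pos rfl, if_pos (subset_refl B₀)]
        omega
      · rw [if_neg hh]
        by_cases hb : (h.1 + 1).testBit j.1
        · by_cases hch : c h = 0
          · simp [hch]
          · have hcomp := hchain h h₀ (by omega) (by omega)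
            have hnot : ¬ bs n (h.1 + 1) ⊆ B₀ := fun hs => hj (hs (mem_bs.mpr hb))
            have hsub : B₀ ⊆ bs n (h.1 + 1) := hcomp.resolve_left hnot
            rw [if_pos hb, if_pos hsub]
            omega
        · simp [hb]
    have hsubset : Finset.Ioc (D - c h₀) D ⊆
        (Finset.Icc 1 M).filter (fun t => lev a t = B₀) := by
      intro t ht
      rw [mem_Ioc] at ht
      rw [mem_filter, mem_Icc]
      refine ⟨⟨by omega, by omega⟩, ?_⟩
      ext j
      rw [mem_lev]
      constructor
      · intro hta
        by_contra hjB
        have := hout j hjB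
        omega
      · intro hjB
        have := hin j hjB
        omega
    calc c h₀ = (Finset.Ioc (D - c h₀) D).card := by rw [Nat.card_Ioc]; omega
      _ ≤ count h₀ := Finset.card_le_card hsubset
  have step2 : ∑ h : Fin (2^n - 1), count h ≤ M := by
    have : ∑ h : Fin (2^n - 1), count h
        = ∑ t ∈ Finset.Icc 1 M, ∑ h : Fin (2^n - 1),
            (if lev a t = bs n (h.1 + 1) then 1 else 0) := by
      rw [← Finset.sum_comm]
      refine Finset.sum_congr rfl (fun h _ => ?_)
      simp only [hcount]
      rw [Finset.card_filter]
    rw [this]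
    calc ∑ t ∈ Finset.Icc 1 M, ∑ h : Fin (2^n - 1),
            (if lev a t = bs n (h.1 + 1) then 1 else 0)
        ≤ ∑ _t ∈ Finset.Icc 1 M, 1 := by
          refine Finset.sum_le_sum (fun t _ => ?_)
          rw [← Finset.card_filter]
          refine Finset.card_le_one.mpr (fun h₁ hm₁ h₂ hm₂ => ?_)
          rw [mem_filter] at hm₁ hm₂
          have := bs_inj (succ_lt h₁) (succ_lt h₂) (hm₁.2 ▸ hm₂.2 ▸ rfl)
          exact Fin.ext (by omega)
      _ = M := by simp
  have heqall : ∀ h, c h = count h := by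
    by_contra hcon
    push_neg at hcon
    obtain ⟨h₀, hne⟩ := hcon
    have : ∑ h : Fin (2^n - 1), c h < ∑ h : Fin (2^n - 1), count h :=
      Finset.sum_lt_sum (fun h _ => step1 h)
        ⟨h₀, mem_univ h₀, lt_of_le_of_ne (step1 h₀) hne⟩
    omega
  intro h
  rw [heqall h]
  simp only [hcount]
  exact (canonC_card a h hM).symm

lemma factorization_finset_gcd {ι : Type*} [DecidableEq ι] {S : Finset ι} (hS : S.Nonempty) :
    ∀ (y : ι → ℕ), (∀ i ∈ S, y i ≠ 0) → ∀ p : ℕ,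
      (S.gcd y).factorization p = S.inf' hS (fun i => (y i).factorization p) := by
  induction hS using Finset.Nonempty.cons_induction with
  | singleton i => intro y hy p; simp
  | cons i s hi hs ih =>
    intro y hy p
    simp only [Finset.cons_eq_insert] at hy ⊢
    rw [Finset.gcd_insert]
    have hg : s.gcd y ≠ 0 := by
      rw [Ne, Finset.gcd_eq_zero_iff]
      obtain ⟨k, hk⟩ := hs
      exact fun hall => hy k (Finset.mem_insert_of_mem hk) (hall k hk)
    have : GCDMonoid.gcd (y i) (s.gcd y) = Nat.gcd (y i) (s.gcd y) := rfl
    rw [this, Nat.factorization_gcd (hy i (Finset.mem_insert_self i s)) hg,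
      Finsupp.inf_apply, Finset.inf'_insert hs,
      ih y (fun k hk => hy k (Finset.mem_insert_of_mem hk)) p]

lemma factorization_finset_lcm {ι : Type*} [DecidableEq ι] (S : Finset ι) :
    ∀ (y : ι → ℕ), (∀ i ∈ S, y i ≠ 0) → ∀ p : ℕ,
      (S.lcm y).factorization p = S.sup (fun i => (y i).factorization p) := by
  induction S using Finset.cons_induction with
  | empty => intro y hy p; simp
  | cons i s hi ih =>
    intro y hy p
    simp only [Finset.cons_eq_insert] at hy ⊢
    rw [Finset.lcm_insert]
    have hl : s.lcm y ≠ 0 := by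
      rw [Ne, Finset.lcm_eq_zero_iff]
      rintro ⟨k, hk, hk0⟩
      exact hy k (Finset.mem_insert_of_mem hk) hk0
    have : GCDMonoid.lcm (y i) (s.lcm y) = Nat.lcm (y i) (s.lcm y) := rfl
    rw [this, Nat.factorization_lcm (hy i (Finset.mem_insert_self i s)) hl,
      Finsupp.sup_apply, Finset.sup_insert,
      ih y (fun k hk => hy k (Finset.mem_insert_of_mem hk)) p]

/-- inverse map -/
def Phi (n : ℕ) (y : Fin n → ℕ) (h : Fin (2^n - 1)) : ℕ :=
  (bs n (h.1 + 1)).gcd y / Nat.gcd ((bs n (h.1 + 1)).gcd y) (((bs n (h.1 + 1))ᶜ).lcm y)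

lemma phi_aux {y : Fin n → ℕ} (hy : ∀ j, 0 < y j) (h : Fin (2^n - 1)) :
    (bs n (h.1 + 1)).gcd y ≠ 0 ∧ ((bs n (h.1 + 1))ᶜ).lcm y ≠ 0 := by
  constructor
  · rw [Ne, Finset.gcd_eq_zero_iff]
    obtain ⟨k, hk⟩ := bs_nonempty (m := h.1 + 1) (by omega) (succ_lt h)
    exact fun hall => (hy k).ne' (hall k hk)
  · rw [Ne, Finset.lcm_eq_zero_iff]
    rintro ⟨k, -, hk0⟩
    exact (hy k).ne' hk0

lemma phi_pos {y : Fin n → ℕ} (hy : ∀ j, 0 < y j) (h : Fin (2^n - 1)) :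
    0 < Phi n y h := by
  obtain ⟨hG, hL⟩ := phi_aux hy h
  have hGpos : 0 < (bs n (h.1 + 1)).gcd y := Nat.pos_of_ne_zero hG
  exact Nat.div_pos (Nat.le_of_dvd hGpos (Nat.gcd_dvd_left _ _))
    (Nat.gcd_pos_of_pos_left _ hGpos)

lemma phi_fact {y : Fin n → ℕ} (hy : ∀ j, 0 < y j) (h : Fin (2^n - 1)) (p : ℕ) :
    (Phi n y h).factorization p = canonC (fun j => (y j).factorization p) h := by
  obtain ⟨hG, hL⟩ := phi_aux hy h
  unfold Phi canonC
  rw [Nat.factorization_div (Nat.gcd_dvd_left _ _), Finsupp.tsub_apply,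
    Nat.factorization_gcd hG hL, Finsupp.inf_apply,
    factorization_finset_gcd (bs_nonempty (by omega) (succ_lt h)) y
      (fun k _ => (hy k).ne') p,
    factorization_finset_lcm _ y (fun k _ => (hy k).ne') p]
  omega

lemma forward_fact {z : Fin (2^n - 1) → ℕ} (hz : ∀ h, 0 < z h) (j : Fin n) (p : ℕ) :
    (∏ h : Fin (2^n - 1), z h ^ epsb (h.1 + 1) j.1).factorization p
      = ∑ h : Fin (2^n - 1), (if (h.1 + 1).testBit j.1 then (z h).factorization p else 0) := by
  rw [Nat.factorization_prod (fun h _ => pow_ne_zero _ (hz h).ne')]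
  rw [Finset.sum_apply']
  refine Finset.sum_congr rfl (fun h _ => ?_)
  rw [Nat.factorization_pow, Finsupp.smul_apply]
  unfold epsb
  split <;> simp

lemma reduced_chain {z : Fin (2^n - 1) → ℕ} (hz : ∀ h, 0 < z h) (hr : Reduced n z) (p : ℕ) :
    ∀ h ℓ : Fin (2^n - 1), 0 < (z h).factorization p → 0 < (z ℓ).factorization p →
      bs n (h.1 + 1) ⊆ bs n (ℓ.1 + 1) ∨ bs n (ℓ.1 + 1) ⊆ bs n (h.1 + 1) := by
  intro h ℓ h1 h2
  by_contra hcon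
  push_neg at hcon
  have hg := hr h ℓ (fun hd => hcon.1 (dom_iff.mp hd)) (fun hd => hcon.2 (dom_iff.mp hd))
  have hm1 : p ∈ (z h).primeFactors := by
    rw [← Nat.support_factorization, Finsupp.mem_support_iff]
    omega
  have hm2 : p ∈ (z ℓ).primeFactors := by
    rw [← Nat.support_factorization, Finsupp.mem_support_iff]
    omega
  have hp : p.Prime := Nat.prime_of_mem_primeFactors hm1
  have : p ∣ 1 := hg ▸ Nat.dvd_gcd (Nat.dvd_of_mem_primeFactors hm1)
    (Nat.dvd_of_mem_primeFactors hm2)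
  exact Nat.Prime.one_lt hp |>.ne' (Nat.dvd_one.mp this)

end Stmt0

open Stmt0 in
/-- The map sending a reduced `N`-tuple `(z_1,…,z_N)` of positive integers
(`N = 2^n-1`) to `(y_1,…,y_n)` with `y_j = ∏_h z_h^{ε_j(h)}` is a bijection onto
the set of `n`-tuples of positive integers. -/
theorem statement0 (n : ℕ) (hn : 2 ≤ n) :
    Set.BijOn (fun (z : Fin (2^n - 1) → ℕ) (j : Fin n) => ∏ h, z h ^ epsb (h.1+1) j.1)
      {z | (∀ h, 0 < z h) ∧ Reduced n z}
      {y : Fin n → ℕ | ∀ j, 0 < y j} := by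
  classical
  refine ⟨?_, ?_, ?_⟩
  · -- MapsTo
    intro z hz j
    exact Finset.prod_pos (fun h _ => pow_pos (hz.1 h) _)
  · -- InjOn
    intro z hz z' hz' heq
    have key : ∀ (w : Fin (2^n - 1) → ℕ), (∀ h, 0 < w h) → Reduced n w → ∀ p h,
        (w h).factorization p =
          canonC (fun j : Fin n =>
            (∏ h : Fin (2^n - 1), w h ^ epsb (h.1 + 1) j.1).factorization p) h := by
      intro w hw hrw p h
      exact canonC_unique (fun h => (w h).factorization p)
        (reduced_chain hw hrw p) _ (fun j => forward_fact hw j p) h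
    have heq' : (fun j : Fin n => ∏ h : Fin (2^n - 1), z h ^ epsb (h.1 + 1) j.1)
        = (fun j : Fin n => ∏ h : Fin (2^n - 1), z' h ^ epsb (h.1 + 1) j.1) := heq
    funext h
    apply Nat.eq_of_factorization_eq (hz.1 h).ne' (hz'.1 h).ne'
    intro p
    have hfun : (fun j : Fin n =>
          (∏ h : Fin (2^n - 1), z h ^ epsb (h.1 + 1) j.1).factorization p)
        = (fun j : Fin n =>
          (∏ h : Fin (2^n - 1), z' h ^ epsb (h.1 + 1) j.1).factorization p) := by
      funext j
      rw [congrFun heq' j]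
    rw [key z hz.1 hz.2 p h, key z' hz'.1 hz'.2 p h, hfun]
  · -- SurjOn
    intro y hy
    have hy' : ∀ j, 0 < y j := hy
    refine ⟨Phi n y, ⟨fun h => phi_pos hy' h, ?_⟩, ?_⟩
    · -- Reduced
      intro h ℓ hd1 hd2
      by_contra hg
      obtain ⟨p, hp, hp1, hp2⟩ := Nat.Prime.not_coprime_iff_dvd.mp hg
      have c1 := hp.factorization_pos_of_dvd (phi_pos hy' h).ne' hp1
      have c2 := hp.factorization_pos_of_dvd (phi_pos hy' ℓ).ne' hp2
      rw [phi_fact hy'] at c1 c2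
      obtain ⟨t1, ht1⟩ := canonC_levex c1.ne'
      obtain ⟨t2, ht2⟩ := canonC_levex c2.ne'
      rcases le_total t1 t2 with hle | hle
      · exact hd2 (dom_iff.mpr (ht2 ▸ ht1 ▸ lev_anti hle))
      · exact hd1 (dom_iff.mpr (ht1 ▸ ht2 ▸ lev_anti hle))
    · -- right inverse
      funext j
      have hprod : 0 < ∏ h : Fin (2^n - 1), Phi n y h ^ epsb (h.1 + 1) j.1 :=
        Finset.prod_pos (fun h _ => pow_pos (phi_pos hy' h) _)
      apply Nat.eq_of_factorization_eq hprod.ne' (hy' j).ne'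
      intro p
      rw [forward_fact (fun h => phi_pos hy' h) j p]
      calc ∑ h : Fin (2^n - 1),
            (if (h.1 + 1).testBit j.1 then (Phi n y h).factorization p else 0)
          = ∑ h : Fin (2^n - 1),
            (if (h.1 + 1).testBit j.1 then
              canonC (fun j => (y j).factorization p) h else 0) := by
            refine Finset.sum_congr rfl (fun h _ => ?_)
            rw [phi_fact hy']
        _ = (y j).factorization p := canonC_marginal _ j
end

section
/- Let $n \geq 2$, $N = 2^n-1$, and let $(z_1,\dots,z_N)$ be a reduced $N$-tuple of positive integers with associated $y_j = \prod_{h=1}^N z_h^{\varepsilon_j(h)}$. Then the least common multiple of $y_1,\dots,y_n$ equals $\prod_{h=1}^N z_h$. -/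
/-- Any nonempty finite chain for a transitive relation has a minimum. -/
lemma chain_min {α : Type*} (r : α → α → Prop) (hr : Transitive r) (S : Finset α)
    (hne : S.Nonempty) (htot : ∀ a ∈ S, ∀ b ∈ S, r a b ∨ r b a) :
    ∃ a ∈ S, ∀ b ∈ S, r a b := by
  classical
  induction S using Finset.cons_induction with
  | empty => exact absurd hne (by simp)
  | cons a S ha ih =>
    by_cases hS : S.Nonempty
    · obtain ⟨m, hm, hmin⟩ := ih hS (fun x hx y hy =>
        htot x (Finset.mem_cons_of_mem hx) y (Finset.mem_cons_of_mem hy))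
      rcases htot a (Finset.mem_cons_self a S) m (Finset.mem_cons_of_mem hm) with h1 | h1
      · refine ⟨a, Finset.mem_cons_self a S, fun b hb => ?_⟩
        rcases Finset.mem_cons.mp hb with rfl | hb
        · rcases htot b (Finset.mem_cons_self b S) b (Finset.mem_cons_self b S) with h | h <;>
            exact h
        · exact hr h1 (hmin b hb)
      · refine ⟨m, Finset.mem_cons_of_mem hm, fun b hb => ?_⟩
        rcases Finset.mem_cons.mp hb with rfl | hb
        · exact h1
        · exact hmin b hb
    · refine ⟨a, Finset.mem_cons_self a S, fun b hb => ?_⟩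
      rcases Finset.mem_cons.mp hb with rfl | hb
      · rcases htot b (Finset.mem_cons_self b S) b (Finset.mem_cons_self b S) with h | h <;>
          exact h
      · exact absurd ⟨b, hb⟩ hS

lemma dom_trans (n : ℕ) : Transitive (fun a b : ℕ => Dom n a b) :=
  fun _ _ _ hab hbc j hj => le_trans (hab j hj) (hbc j hj)

/-- For a reduced tuple `(z_1,…,z_N)` of positive integers with
`y_j = ∏_h z_h^{ε_j(h)}`, the lcm of `y_1,…,y_n` equals `∏_h z_h`. -/
theorem statement1 (n : ℕ) (hn : 2 ≤ n) (z : Fin (2^n - 1) → ℕ)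
    (hz : ∀ h, 0 < z h) (hred : Reduced n z) (y : Fin n → ℕ)
    (hy : ∀ j : Fin n, y j = ∏ h, z h ^ epsb (h.1+1) j.1) :
    Finset.univ.lcm y = ∏ h, z h := by
  classical
  have hN0 : (∏ h, z h) ≠ 0 := by
    exact (Finset.prod_pos (fun h _ => hz h)).ne'
  -- each y j divides the product
  have hy_dvd : ∀ j : Fin n, y j ∣ ∏ h, z h := by
    intro j
    rw [hy j]
    apply Finset.prod_dvd_prod_of_dvd
    intro h _
    unfold epsb
    split
    · simp
    · simp
  have hy_ne : ∀ j : Fin n, y j ≠ 0 := by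
    intro j
    rw [hy j]
    exact (Finset.prod_pos (fun h _ => pow_pos (hz h) _)).ne'
  have hlcm_dvd : Finset.univ.lcm y ∣ ∏ h, z h :=
    Finset.lcm_dvd (fun j _ => hy_dvd j)
  have hlcm_ne : Finset.univ.lcm y ≠ 0 := by
    intro h0
    rw [h0] at hlcm_dvd
    exact hN0 (zero_dvd_iff.mp hlcm_dvd)
  refine Nat.dvd_antisymm hlcm_dvd ?_
  rw [← Nat.factorization_le_iff_dvd hN0 hlcm_ne, Finsupp.le_def]
  intro p
  by_cases hp : p.Prime
  swap
  · simp [Nat.factorization_eq_zero_of_not_prime _ hp]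
  -- factorization of the product
  have hprod_fact : (∏ h, z h).factorization p = ∑ h, (z h).factorization p := by
    rw [Nat.factorization_prod (fun h _ => (hz h).ne')]
    simp [Finsupp.finset_sum_apply]
  by_cases hS : ∃ h : Fin (2^n - 1), p ∣ z h
  · -- the set of indices whose entry is divisible by p
    set S : Finset (Fin (2^n - 1)) := Finset.univ.filter (fun h => p ∣ z h) with hSdef
    have hSne : S.Nonempty := by
      obtain ⟨h, hh⟩ := hS
      exact ⟨h, by simp [hSdef, hh]⟩
    -- S is a chain under domination
    have htot : ∀ a ∈ S, ∀ b ∈ S, Dom n (a.1+1) (b.1+1) ∨ Dom n (b.1+1) (a.1+1) := by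
      intro a ha b hb
      by_contra hc
      push_neg at hc
      have := hred a b hc.1 hc.2
      have hpa : p ∣ z a := (Finset.mem_filter.mp ha).2
      have hpb : p ∣ z b := (Finset.mem_filter.mp hb).2
      have : p ∣ 1 := this ▸ Nat.dvd_gcd hpa hpb
      exact absurd (Nat.le_of_dvd one_pos this) (by have := hp.two_le; omega : ¬ p ≤ 1)
    obtain ⟨h₀, hh₀S, hh₀min⟩ := chain_min (fun a b => Dom n (a.1+1) (b.1+1))
      (fun _ _ _ hab hbc j hj => le_trans (hab j hj) (hbc j hj)) S hSne htot
    -- find a bit set in h₀+1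
    obtain ⟨i, hi, _⟩ := Nat.exists_most_significant_bit (n := h₀.1 + 1) (Nat.succ_ne_zero _)
    have hilt : i < n := by
      by_contra hge
      push_neg at hge
      have h2i : 2 ^ i ≤ h₀.1 + 1 := Nat.ge_two_pow_of_testBit hi
      have hlt : h₀.1 + 1 < 2 ^ n := by
        have := h₀.2
        omega
      have : 2 ^ n ≤ 2 ^ i := Nat.pow_le_pow_right (by norm_num) hge
      omega
    set j₀ : Fin n := ⟨i, hilt⟩ with hj₀
    -- every element of S has bit i set
    have hbit : ∀ h ∈ S, epsb (h.1 + 1) i = 1 := by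
      intro h hh
      have := hh₀min h hh i hilt
      unfold epsb at this ⊢
      simp [hi] at this
      split
      · rfl
      · next hfalse => simp [hfalse] at this
    -- factorization of y j₀
    have hyfact : (y j₀).factorization p
        = ∑ h, epsb (h.1+1) i * (z h).factorization p := by
      rw [hy j₀]
      rw [Nat.factorization_prod (fun h _ => (pow_pos (hz h) _).ne')]
      rw [Finsupp.finset_sum_apply]
      refine Finset.sum_congr rfl (fun h _ => ?_)
      rw [Nat.factorization_pow]
      simp [hj₀]
    have hle : (∏ h, z h).factorization p ≤ (y j₀).factorization p := by
      rw [hprod_fact, hyfact]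
      refine Finset.sum_le_sum (fun h _ => ?_)
      by_cases hdvd : p ∣ z h
      · have : h ∈ S := by simp [hSdef, hdvd]
        rw [hbit h this, one_mul]
      · rw [Nat.factorization_eq_zero_of_not_dvd hdvd]
        simp
    refine le_trans hle ?_
    have hdvd_lcm : y j₀ ∣ Finset.univ.lcm y := Finset.dvd_lcm (Finset.mem_univ j₀)
    exact (Nat.factorization_le_iff_dvd (hy_ne j₀) hlcm_ne).mpr hdvd_lcm p
  · push_neg at hS
    rw [hprod_fact]
    have : ∀ h : Fin (2^n - 1), (z h).factorization p = 0 :=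
      fun h => Nat.factorization_eq_zero_of_not_dvd (hS h)
    simp [this]
end

section
/- For every integer $n \geq 1$ there is a unique polynomial $P_n$ with integer coefficients such that for all real $x$ with $|x| < 1$, $\sum_{k \geq 0} (k+1)^n x^k = P_n(x)/(1-x)^{n+1}$. Moreover $P_n$ has degree $n-1$ and is monic. -/
open Finset Polynomial

lemma evalDiff (p : Polynomial ℤ) :
    (fwdDiff (1:ℤ) (fun t ↦ p.eval t)) = fun t ↦ (p.comp (X + 1) - p).eval t := by
  funext t; simp [fwdDiff, eval_comp]

lemma degree_comp_sub_lt (p : Polynomial ℤ) (d : ℕ) (hp : p.degree < (d:ℕ) + 1) :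
    (p.comp (X + 1) - p).degree < (d : ℕ) := by
  rcases eq_or_ne p 0 with rfl | hp0
  · simp only [Polynomial.zero_comp, sub_zero, Polynomial.degree_zero]
    exact WithBot.bot_lt_coe _
  have hXd : ((X + 1 : Polynomial ℤ)).natDegree = 1 := by
    simpa using Polynomial.natDegree_X_add_C (1:ℤ)
  have hlc : (p.comp (X + 1)).leadingCoeff = p.leadingCoeff := by
    rw [Polynomial.leadingCoeff_comp (by rw [hXd]; norm_num)]
    have : (X + 1 : Polynomial ℤ).leadingCoeff = 1 := by
      simpa using Polynomial.leadingCoeff_X_add_C (1:ℤ)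
    rw [this]; simp
  have hcomp0 : p.comp (X + 1) ≠ 0 := by
    intro h
    apply hp0
    have := hlc
    rw [h, Polynomial.leadingCoeff_zero] at this
    exact Polynomial.leadingCoeff_eq_zero.mp this.symm
  have hdeg : (p.comp (X + 1)).degree = p.degree := by
    rw [Polynomial.degree_eq_natDegree hcomp0, Polynomial.degree_eq_natDegree hp0]
    rw [Polynomial.natDegree_comp, hXd, mul_one]
  have hlt : (p.comp (X + 1) - p).degree < p.degree :=
    hdeg ▸ Polynomial.degree_sub_lt hdeg hcomp0 hlc
  calc (p.comp (X + 1) - p).degree < p.degree := hlt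
    _ ≤ (d : ℕ) := by
        rw [Polynomial.degree_eq_natDegree hp0] at hp ⊢
        exact_mod_cast Nat.lt_succ_iff.mp (by exact_mod_cast hp)

lemma iter_fwdDiff_zero (d : ℕ) (p : Polynomial ℤ) (hp : p.degree < (d : ℕ)) :
    (fwdDiff (1:ℤ))^[d] (fun t ↦ p.eval t) = fun _ ↦ 0 := by
  induction d generalizing p with
  | zero =>
    have : p = 0 := by
      rw [← Polynomial.degree_eq_bot]
      exact Nat.WithBot.lt_zero_iff.mp (by exact_mod_cast hp)
    simp [this]
  | succ d ih =>
    rw [Function.iterate_succ_apply, evalDiff]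
    exact ih _ (degree_comp_sub_lt p d (by exact_mod_cast hp))

lemma keyZ (n : ℕ) (y : ℤ) :
    ∑ i ∈ Finset.range (n+2), ((-1:ℤ)^i * ((n+1).choose i) * (y - i + 1)^n) = 0 := by
  have hdeg : ((X + 1 : Polynomial ℤ) ^ n).degree < ((n+1 : ℕ) : WithBot ℕ) := by
    apply lt_of_le_of_lt (Polynomial.degree_pow_le _ _)
    have : (X + 1 : Polynomial ℤ).degree ≤ 1 := by
      simpa using le_of_eq (Polynomial.degree_X_add_C (1:ℤ))
    calc (n : ℕ) • (X + 1 : Polynomial ℤ).degree ≤ (n:ℕ) • (1 : WithBot ℕ) := by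
          exact nsmul_le_nsmul_right this n
      _ = (n : WithBot ℕ) := by simp
      _ < ((n+1:ℕ) : WithBot ℕ) := by exact_mod_cast Nat.lt_succ_self n
  have h0 := iter_fwdDiff_zero (n+1) ((X + 1 : Polynomial ℤ)^n) hdeg
  have heq : (fun t : ℤ ↦ (((X:Polynomial ℤ) + 1)^n).eval t) = fun t : ℤ ↦ (t + 1)^n := by
    funext t; simp
  rw [heq] at h0
  have h1 := fwdDiff_iter_eq_sum_shift (1:ℤ) (fun t : ℤ ↦ (t+1)^n) (n+1) (y - (n+1))
  rw [h0] at h1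
  -- h1 : 0 = ∑ k in range (n+2), ((-1)^(n+1-k) * (n+1).choose k) • (y - (n+1) + k•1 + 1)^n
  rw [← Finset.sum_range_reflect] at h1
  simp only at h1
  rw [h1]
  apply Finset.sum_congr rfl
  intro j hj
  have hj' : j ≤ n + 1 := by simpa [Nat.lt_succ_iff] using hj
  have e1 : n + 1 + 1 - 1 - j = n + 1 - j := by omega
  have e2 : n + 1 - (n + 1 - j) = j := Nat.sub_sub_self hj'
  have e3 : (n+1).choose (n + 1 - j) = (n+1).choose j := Nat.choose_symm hj'
  have e4 : ((n + 1 - j : ℕ) : ℤ) = (n : ℤ) + 1 - j := by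
    push_cast [Nat.cast_sub hj']; ring
  rw [e1, e2, e3]
  rw [smul_eq_mul, nsmul_eq_mul, mul_one]
  rw [e4]
  ring

def eulC (n m : ℕ) : ℤ :=
  ∑ i ∈ Finset.range (m+1), (-1:ℤ)^i * ((n+1).choose i) * ((m:ℤ) - i + 1)^n

noncomputable def eulP (n : ℕ) : Polynomial ℤ :=
  ∑ m ∈ Finset.range n, Polynomial.C (eulC n m) * Polynomial.X ^ m

lemma eulP_coeff (n k : ℕ) : (eulP n).coeff k = if k < n then eulC n k else 0 := by
  rw [eulP, Polynomial.finset_sum_coeff]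
  simp only [Polynomial.coeff_C_mul, Polynomial.coeff_X_pow]
  rw [Finset.sum_congr rfl (fun m _ => by rw [mul_ite, mul_one, mul_zero])]
  simp [Finset.sum_ite_eq', Finset.mem_range, eq_comm]

lemma eulC_lead (n : ℕ) (hn : 1 ≤ n) : eulC n (n - 1) = 1 := by
  have hz := keyZ n ((n : ℤ) - 1)
  rw [Finset.sum_range_succ, Finset.sum_range_succ] at hz
  -- terms at i = n and i = n+1
  have hn0 : ((n:ℤ) - 1 - n + 1) = 0 := by ring
  have h0n : ((0:ℤ))^n = 0 := zero_pow (by omega)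
  have ht1 : (-1:ℤ)^(n+1) * ((n+1).choose (n+1)) * ((n:ℤ) - 1 - (n+1) + 1)^n = -1 := by
    rw [Nat.choose_self]
    have : ((n:ℤ) - 1 - (n+1) + 1) = -1 := by ring
    rw [this]
    push_cast
    rw [mul_one, ← pow_add]
    have : Odd (n + 1 + n) := by exact ⟨n, by ring⟩
    rw [this.neg_one_pow]
  push_cast at hz
  rw [hn0, h0n, mul_zero, add_zero, ht1] at hz
  have hs : ∑ i ∈ Finset.range n, (-1:ℤ)^i * ((n+1).choose i) * ((n:ℤ) - 1 - i + 1)^n = 1 := by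
    omega
  rw [eulC]
  have hr : n - 1 + 1 = n := by omega
  rw [hr]
  have hcast : ((n - 1 : ℕ) : ℤ) = (n : ℤ) - 1 := by
    rw [Nat.cast_sub hn]; norm_num
  rw [Finset.sum_congr rfl (fun i _ => by rw [hcast])]
  exact hs

lemma eulP_natDegree (n : ℕ) (hn : 1 ≤ n) : (eulP n).natDegree = n - 1 := by
  apply le_antisymm
  · rw [Polynomial.natDegree_le_iff_coeff_eq_zero]
    intro m hm
    rw [eulP_coeff]
    have : ¬ m < n := by omega
    simp [this]
  · apply Polynomial.le_natDegree_of_ne_zero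
    rw [eulP_coeff, if_pos (by omega), eulC_lead n hn]
    exact one_ne_zero

lemma eulP_monic (n : ℕ) (hn : 1 ≤ n) : (eulP n).Monic := by
  unfold Polynomial.Monic Polynomial.leadingCoeff
  rw [eulP_natDegree n hn, eulP_coeff, if_pos (by omega), eulC_lead n hn]

lemma summable_f (n : ℕ) {x : ℝ} (hx : |x| < 1) :
    Summable (fun k : ℕ ↦ ((k:ℝ)+1)^n * x^k) := by
  have hx' : ‖x‖ < 1 := by simpa [Real.norm_eq_abs] using hx
  have heq : (fun k : ℕ ↦ ((k:ℝ)+1)^n * x^k)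
      = fun k : ℕ ↦ ∑ j ∈ Finset.range (n+1), (n.choose j : ℝ) * ((k:ℝ)^j * x^k) := by
    funext k
    rw [add_pow, Finset.sum_mul]
    apply Finset.sum_congr rfl
    intro j _
    ring
  rw [heq]
  exact summable_sum fun j _ ↦ (summable_pow_mul_geometric_of_norm_lt_one j hx').mul_left _

lemma main_id (n : ℕ) (hn : 1 ≤ n) (x : ℝ) (hx : |x| < 1) :
    ∑' k : ℕ, ((k : ℝ) + 1) ^ n * x ^ k = (Polynomial.aeval x (eulP n)) / (1 - x) ^ (n + 1) := by
  have hx1 : x < 1 := (abs_lt.mp hx).2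
  have hxne : (1 : ℝ) - x ≠ 0 := ne_of_gt (by linarith)
  have hpow : ((1:ℝ) - x)^(n+1) ≠ 0 := pow_ne_zero _ hxne
  rw [eq_div_iff hpow]
  set f : ℕ → ℝ := fun k ↦ ((k:ℝ)+1)^n * x^k with hfdef
  have hf : Summable f := summable_f n hx
  set g : ℕ → ℕ → ℝ := fun i m ↦
    if i ≤ m then (-1:ℝ)^i * ((n+1).choose i) * ((m:ℝ) - i + 1)^n * x^m else 0 with hgdef
  have hginj : ∀ i : ℕ, Function.Injective (fun k : ℕ ↦ k + i) := fun i a b h ↦ by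
    simpa using h
  have hg0 : ∀ i : ℕ, ∀ m, m ∉ Set.range (fun k : ℕ ↦ k + i) → g i m = 0 := by
    intro i m hm
    have h : ¬ i ≤ m := fun h ↦ hm ⟨m - i, by simpa using Nat.sub_add_cancel h⟩
    simp [hgdef, h]
  have hgcomp : ∀ i : ℕ, (fun k : ℕ ↦ g i (k + i))
      = fun k : ℕ ↦ ((-1:ℝ)^i * ((n+1).choose i) * x^i) * f k := by
    intro i; funext k
    have h1 : i ≤ k + i := Nat.le_add_left i k
    have h2 : ((k + i : ℕ) : ℝ) - i + 1 = (k : ℝ) + 1 := by push_cast; ring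
    simp only [hgdef, if_pos h1, h2, hfdef]
    rw [pow_add]
    ring
  have hgsum : ∀ i : ℕ, Summable (g i) := by
    intro i
    rw [← (hginj i).summable_iff (hg0 i)]
    have := hf.mul_left ((-1:ℝ)^i * ((n+1).choose i) * x^i)
    rw [← hgcomp i] at this
    exact this
  have hgt : ∀ i : ℕ, ∑' m, g i m = ((-1:ℝ)^i * ((n+1).choose i) * x^i) * ∑' k, f k := by
    intro i
    have hsupp : Function.support (g i) ⊆ Set.range (fun k : ℕ ↦ k + i) := by
      intro m hm
      by_contra h
      exact hm (hg0 i m h)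
    rw [← (hginj i).tsum_eq hsupp]
    have : ∑' k, g i (k + i)
        = ∑' k, ((-1:ℝ)^i * ((n+1).choose i) * x^i) * f k := by
      exact tsum_congr fun k ↦ congrFun (hgcomp i) k
    rw [this, tsum_mul_left]
  have hinner : ∀ m : ℕ, ∑ i ∈ Finset.range (n+2), g i m
      = (if m < n then (eulC n m : ℝ) else 0) * x^m := by
    intro m
    by_cases hm : m < n
    · rw [if_pos hm]
      have hsub : Finset.range (m+1) ⊆ Finset.range (n+2) := Finset.range_subset_range.mpr (by omega)
      rw [← Finset.sum_subset hsub (by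
        intro i _ hi
        have h : ¬ i ≤ m := by simp only [Finset.mem_range, Nat.lt_succ_iff] at hi; omega
        simp [hgdef, h])]
      rw [eulC]
      push_cast
      rw [Finset.sum_mul]
      apply Finset.sum_congr rfl
      intro i hi
      have h : i ≤ m := by simpa [Nat.lt_succ_iff] using hi
      simp only [hgdef, if_pos h]
    · rw [if_neg hm, zero_mul]
      have hfull : ∑ i ∈ Finset.range (n+2), g i m
          = ∑ i ∈ Finset.range (n+2),
              (-1:ℝ)^i * ((n+1).choose i) * ((m:ℝ) - i + 1)^n * x^m := by
        apply Finset.sum_congr rfl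
        intro i hi
        by_cases h : i ≤ m
        · simp [hgdef, h]
        · have him : i = m + 1 := by
            simp only [Finset.mem_range] at hi; omega
          have hz0 : ((m:ℝ) - i + 1) = 0 := by rw [him]; push_cast; ring
          simp [hgdef, h, hz0, zero_pow (show n ≠ 0 by omega)]
      rw [hfull, ← Finset.sum_mul]
      have hzr : ∑ i ∈ Finset.range (n+2),
          (-1:ℝ)^i * ((n+1).choose i) * ((m:ℝ) - i + 1)^n = 0 := by
        exact_mod_cast keyZ n (m : ℤ)
      rw [hzr, zero_mul]
  have hexp : ((1:ℝ) - x)^(n+1) = ∑ i ∈ Finset.range (n+2), (-1:ℝ)^i * ((n+1).choose i) * x^i := by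
    have h : (1:ℝ) - x = -x + 1 := by ring
    rw [h, add_pow]
    apply Finset.sum_congr rfl
    intro i _
    rw [neg_pow]
    ring
  calc (∑' k, f k) * ((1:ℝ) - x)^(n+1)
      = ∑ i ∈ Finset.range (n+2), ((-1:ℝ)^i * ((n+1).choose i) * x^i) * ∑' k, f k := by
        rw [hexp, Finset.mul_sum]
        exact Finset.sum_congr rfl fun i _ ↦ by ring
    _ = ∑ i ∈ Finset.range (n+2), ∑' m, g i m := Finset.sum_congr rfl fun i _ ↦ (hgt i).symm
    _ = ∑' m, ∑ i ∈ Finset.range (n+2), g i m := (Summable.tsum_finsetSum fun i _ ↦ hgsum i).symm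
    _ = ∑' m, (if m < n then (eulC n m : ℝ) else 0) * x^m := tsum_congr hinner
    _ = ∑ m ∈ Finset.range n, (if m < n then (eulC n m : ℝ) else 0) * x^m := by
        apply tsum_eq_sum
        intro m hm
        have h : ¬ m < n := by simpa using hm
        simp [h]
    _ = Polynomial.aeval x (eulP n) := by
        rw [eulP, map_sum]
        apply Finset.sum_congr rfl
        intro m hm
        have h : m < n := Finset.mem_range.mp hm
        simp [h]

/-- For every `n ≥ 1` there is a unique integer polynomial `P` such that for all real
`x` with `|x| < 1`, `∑_{k≥0} (k+1)^n x^k = P(x)/(1-x)^{n+1}`; moreover `P` is monic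
of degree `n - 1`. -/
theorem statement3 (n : ℕ) (hn : 1 ≤ n) :
    ∃! P : Polynomial ℤ,
      (∀ x : ℝ, |x| < 1 →
        ∑' k : ℕ, ((k : ℝ) + 1) ^ n * x ^ k = (Polynomial.aeval x P) / (1 - x) ^ (n + 1)) ∧
      P.natDegree = n - 1 ∧ P.Monic := by
  refine ⟨eulP n, ⟨fun x hx ↦ main_id n hn x hx, eulP_natDegree n hn, eulP_monic n hn⟩, ?_⟩
  rintro Q ⟨hQ, _, _⟩
  have key : ∀ x : ℝ, x ∈ Set.Ioo (-1:ℝ) 1 →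
      Polynomial.aeval x Q = Polynomial.aeval x (eulP n) := by
    intro x hx
    have hx' : |x| < 1 := abs_lt.mpr ⟨hx.1, hx.2⟩
    have hx1 : x < 1 := hx.2
    have hpow : ((1:ℝ) - x)^(n+1) ≠ 0 := pow_ne_zero _ (ne_of_gt (by linarith))
    have h3 := (hQ x hx').symm.trans (main_id n hn x hx')
    rw [div_eq_div_iff hpow hpow] at h3
    exact mul_right_cancel₀ hpow h3
  have hmap : Q.map (algebraMap ℤ ℝ) = (eulP n).map (algebraMap ℤ ℝ) := by
    rw [← sub_eq_zero]
    apply Polynomial.eq_zero_of_infinite_isRoot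
    apply (Set.Ioo_infinite (by norm_num : (-1:ℝ) < 1)).mono
    intro x hx
    simp only [Set.mem_setOf_eq, Polynomial.IsRoot, Polynomial.eval_sub, Polynomial.eval_map]
    have h := key x hx
    rw [Polynomial.aeval_def, Polynomial.aeval_def] at h
    rw [sub_eq_zero]
    exact h
  exact Polynomial.map_injective _ (RingHom.injective_int _) hmap
end

section
/- Let $n \geq 3$ and $N = 2^n - 1$. The number of unordered pairs $\{h, \ell\}$ of distinct elements of $\{1,\dots,N-1\}$ that are incomparable for the domination order $\preceq$ (i.e. $h \not\preceq \ell$ and $\ell \not\preceq h$) equals $2^{n-1}(2^n + 1) - 3^n$. -/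
open Finset

def eb (n h : ℕ) : Finset (Fin n) := Finset.univ.filter (fun j => h.testBit j.1)

lemma mem_eb {n h : ℕ} {j : Fin n} : j ∈ eb n h ↔ h.testBit j.1 := by simp [eb]

lemma dom_iff_subset {n h ℓ : ℕ} : Dom n h ℓ ↔ eb n h ⊆ eb n ℓ := by
  constructor
  · intro hd j hj
    rw [mem_eb] at hj ⊢
    have := hd j.1 j.2
    simp [epsb, hj] at this
    exact of_decide_eq_true (by revert this; cases hb : ℓ.testBit j.1 <;> simp)
  · intro hs j hjn
    unfold epsb
    by_cases hb : h.testBit j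
    · have h1 : (⟨j, hjn⟩ : Fin n) ∈ eb n h := mem_eb.2 hb
      have h2 := mem_eb.1 (hs h1)
      simp [hb, h2]
    · simp [hb]

lemma eb_inj {n h ℓ : ℕ} (hh : h < 2^n) (hl : ℓ < 2^n) (he : eb n h = eb n ℓ) : h = ℓ := by
  apply Nat.eq_of_testBit_eq
  intro i
  by_cases hi : i < n
  · have := congrArg (fun s => decide ((⟨i, hi⟩ : Fin n) ∈ s)) he
    simpa [mem_eb] using this
  · have hle : 2^n ≤ 2^i := Nat.pow_le_pow_right (by norm_num) (le_of_not_gt hi)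
    rw [Nat.testBit_lt_two_pow (lt_of_lt_of_le hh hle),
        Nat.testBit_lt_two_pow (lt_of_lt_of_le hl hle)]

lemma eb_zero {n : ℕ} : eb n 0 = ∅ := by simp [eb]

lemma eb_top {n : ℕ} : eb n (2^n - 1) = Finset.univ := by
  ext j; simp [mem_eb, Nat.testBit_two_pow_sub_one, j.2]
open Finset

lemma eb_image' {n : ℕ} (f : ℕ → Finset (Fin n)) (hinj : Set.InjOn f (Finset.range (2^n)))
    : ((Finset.range (2^n)).image f).card = 2^n := by
  rw [Finset.card_image_of_injOn hinj, card_range]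

lemma sum_pow_card (n : ℕ) :
    ∑ t ∈ (Finset.univ : Finset (Fin n)).powerset, 2 ^ t.card = 3 ^ n := by
  have h := Finset.prod_add (fun _ : Fin n => 2) (fun _ : Fin n => 1) Finset.univ
  simp [Finset.prod_const] at h
  rw [Finset.powerset_univ, ← h]

lemma card_subpairs (n : ℕ) :
    (((Finset.univ : Finset (Fin n)).powerset ×ˢ (Finset.univ : Finset (Fin n)).powerset).filter
      (fun p => p.1 ⊆ p.2)).card = 3 ^ n := by
  have h1 : (((Finset.univ : Finset (Fin n)).powerset ×ˢ (Finset.univ : Finset (Fin n)).powerset).filter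
      (fun p => p.1 ⊆ p.2)) =
      (Finset.univ : Finset (Fin n)).powerset.biUnion (fun b => b.powerset.image (fun a => (a, b))) := by
    ext p
    simp only [Finset.mem_filter, Finset.mem_product, Finset.mem_biUnion, Finset.mem_powerset,
      Finset.mem_image]
    constructor
    · rintro ⟨⟨_, h2⟩, h3⟩
      exact ⟨p.2, h2, p.1, h3, rfl⟩
    · rintro ⟨b, hb, a, ha, rfl⟩
      exact ⟨⟨ha.trans hb, hb⟩, ha⟩
  rw [h1, Finset.card_biUnion]
  · rw [← sum_pow_card n]
    apply Finset.sum_congr rfl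
    intro b _
    rw [Finset.card_image_of_injective _ (fun a a' h => congrArg Prod.fst h),
      Finset.card_powerset]
  · intro b _ b' _ hbb
    apply Finset.disjoint_left.2
    rintro p hp hp'
    simp only [Finset.mem_image] at hp hp'
    obtain ⟨a, _, rfl⟩ := hp
    obtain ⟨a', _, h⟩ := hp'
    exact hbb (congrArg Prod.snd h).symm

variable {n : ℕ}

abbrev U (n : ℕ) : Finset (Finset (Fin n) × Finset (Fin n)) :=
  (Finset.univ : Finset (Fin n)).powerset ×ˢ (Finset.univ : Finset (Fin n)).powerset

lemma cardB1 : ((U n).filter (fun p => p.1 ⊆ p.2 ∧ p.1 = ∅)).card = 2 ^ n := by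
  have h : (U n).filter (fun p => p.1 ⊆ p.2 ∧ p.1 = ∅) =
      (Finset.univ : Finset (Fin n)).powerset.image (fun b => ((∅ : Finset (Fin n)), b)) := by
    ext p
    simp only [Finset.mem_filter, Finset.mem_product, Finset.mem_powerset, Finset.mem_image]
    constructor
    · rintro ⟨⟨_, h2⟩, _, h4⟩
      exact ⟨p.2, h2, by rw [← h4]⟩
    · rintro ⟨b, hb, rfl⟩
      exact ⟨⟨empty_subset _, hb⟩, empty_subset _, rfl⟩
  rw [h, Finset.card_image_of_injective _ (fun a a' h => congrArg Prod.snd h),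
    Finset.card_powerset, card_univ, Fintype.card_fin]

lemma cardB2 (hn : 1 ≤ n) :
    ((U n).filter (fun p => (p.1 ⊆ p.2 ∧ p.1 ≠ ∅) ∧ p.2 = Finset.univ)).card = 2 ^ n - 1 := by
  have h : (U n).filter (fun p => (p.1 ⊆ p.2 ∧ p.1 ≠ ∅) ∧ p.2 = Finset.univ) =
      ((Finset.univ : Finset (Fin n)).powerset.erase ∅).image
        (fun a => (a, (Finset.univ : Finset (Fin n)))) := by
    ext p
    simp only [Finset.mem_filter, Finset.mem_product, Finset.mem_powerset, Finset.mem_image,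
      Finset.mem_erase]
    constructor
    · rintro ⟨⟨h1, _⟩, ⟨_, h3⟩, h4⟩
      exact ⟨p.1, ⟨h3, h1⟩, by rw [← h4]⟩
    · rintro ⟨a, ⟨ha1, ha2⟩, rfl⟩
      exact ⟨⟨ha2, subset_rfl⟩, ⟨subset_univ _, ha1⟩, rfl⟩
  rw [h, Finset.card_image_of_injective _ (fun a a' h => congrArg Prod.fst h),
    Finset.card_erase_of_mem (by simp), Finset.card_powerset, card_univ, Fintype.card_fin]

lemma cardB3 (hn : 1 ≤ n) :
    ((U n).filter (fun p => ((p.1 ⊆ p.2 ∧ p.1 ≠ ∅) ∧ p.2 ≠ Finset.univ) ∧ p.1 = p.2)).card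
      = 2 ^ n - 2 := by
  have huniv : (Finset.univ : Finset (Fin n)) ≠ ∅ := by
    simp [← Finset.nonempty_iff_ne_empty, Finset.univ_nonempty_iff]
    exact Fin.pos_iff_nonempty.1 hn
  have h : (U n).filter (fun p => ((p.1 ⊆ p.2 ∧ p.1 ≠ ∅) ∧ p.2 ≠ Finset.univ) ∧ p.1 = p.2) =
      (((Finset.univ : Finset (Fin n)).powerset.erase ∅).erase Finset.univ).image
        (fun a => (a, a)) := by
    ext p
    simp only [Finset.mem_filter, Finset.mem_product, Finset.mem_powerset, Finset.mem_image,
      Finset.mem_erase]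
    constructor
    · rintro ⟨⟨h1, _⟩, ⟨⟨_, h3⟩, h4⟩, h5⟩
      exact ⟨p.1, ⟨by rw [h5]; exact h4, h3, h1⟩, by rw [Prod.ext_iff]; exact ⟨rfl, h5⟩⟩
    · rintro ⟨a, ⟨ha0, ha1, ha2⟩, rfl⟩
      exact ⟨⟨ha2, ha2⟩, ⟨⟨subset_rfl, ha1⟩, ha0⟩, rfl⟩
  rw [h, Finset.card_image_of_injective _ (fun a a' h => congrArg Prod.fst h),
    Finset.card_erase_of_mem (by simp [huniv]),
    Finset.card_erase_of_mem (by simp), Finset.card_powerset, card_univ, Fintype.card_fin]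
  omega

open scoped Classical in
lemma cardA3 (hn : 1 ≤ n) :
    ((U n).filter (fun p => ((p.1 ⊆ p.2 ∧ p.1 ≠ ∅) ∧ p.2 ≠ Finset.univ) ∧ p.1 ≠ p.2)).card
      + 3 * 2 ^ n = 3 ^ n + 3 := by
  have h2n : 2 ≤ 2 ^ n := by
    calc 2 = 2 ^ 1 := rfl
    _ ≤ 2 ^ n := Nat.pow_le_pow_right (by norm_num) hn
  have t1 := Finset.card_filter_add_card_filter_not
    (s := (U n).filter (fun p => p.1 ⊆ p.2)) (p := fun p => p.1 = ∅)
  rw [Finset.filter_filter, Finset.filter_filter, card_subpairs n] at t1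
  have t2 := Finset.card_filter_add_card_filter_not
    (s := (U n).filter (fun p => p.1 ⊆ p.2 ∧ ¬p.1 = ∅)) (p := fun p => p.2 = Finset.univ)
  rw [Finset.filter_filter, Finset.filter_filter] at t2
  have t3 := Finset.card_filter_add_card_filter_not
    (s := (U n).filter (fun p => (p.1 ⊆ p.2 ∧ ¬p.1 = ∅) ∧ ¬p.2 = Finset.univ))
    (p := fun p => p.1 = p.2)
  rw [Finset.filter_filter, Finset.filter_filter] at t3
  simp only [← ne_eq] at t1 t2 t3
  rw [cardB1] at t1
  rw [cardB2 hn] at t2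
  have t4 := Finset.card_filter_add_card_filter_not
    (s := (U n).filter (fun p => ((p.1 ⊆ p.2 ∧ p.1 ≠ ∅) ∧ p.2 ≠ Finset.univ)))
    (p := fun p => p.1 = p.2)
  rw [cardB3 hn] at t3
  omega

lemma eb_surj {n : ℕ} (s : Finset (Fin n)) : ∃ h, h < 2 ^ n ∧ eb n h = s := by
  have himg : (Finset.range (2 ^ n)).image (eb n) = (Finset.univ : Finset (Fin n)).powerset := by
    apply Finset.eq_of_subset_of_card_le
    · intro t _
      simp [Finset.mem_powerset]
    · rw [Finset.card_image_of_injOn (fun a ha b hb hab =>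
        eb_inj (Finset.mem_range.1 ha) (Finset.mem_range.1 hb) hab),
        Finset.card_range, Finset.card_powerset, card_univ, Fintype.card_fin]
  have hs : s ∈ (Finset.range (2 ^ n)).image (eb n) := by
    rw [himg]; simp
  obtain ⟨h, hh, he⟩ := Finset.mem_image.1 hs
  exact ⟨h, Finset.mem_range.1 hh, he⟩

lemma dom_antisymm {n h ℓ : ℕ} (hh : h < 2 ^ n) (hl : ℓ < 2 ^ n)
    (h1 : Dom n h ℓ) (h2 : Dom n ℓ h) : h = ℓ :=
  eb_inj hh hl (Finset.Subset.antisymm (dom_iff_subset.1 h1) (dom_iff_subset.1 h2))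

open scoped Classical in
lemma cardO (hn : 3 ≤ n) :
    (((Finset.Icc 1 (2 ^ n - 2)) ×ˢ (Finset.Icc 1 (2 ^ n - 2))).filter
      (fun p => Dom n p.1 p.2 ∧ p.1 ≠ p.2)).card + 3 * 2 ^ n = 3 ^ n + 3 := by
  have h8 : 8 ≤ 2 ^ n := by
    calc 8 = 2 ^ 3 := rfl
    _ ≤ 2 ^ n := Nat.pow_le_pow_right (by norm_num) hn
  have hmem : ∀ h ∈ Finset.Icc 1 (2 ^ n - 2), h < 2 ^ n ∧ h ≠ 0 ∧ h ≠ 2 ^ n - 1 := by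
    intro h hh
    rw [Finset.mem_Icc] at hh
    omega
  have hcard : (((Finset.Icc 1 (2 ^ n - 2)) ×ˢ (Finset.Icc 1 (2 ^ n - 2))).filter
      (fun p => Dom n p.1 p.2 ∧ p.1 ≠ p.2)).card =
      ((U n).filter (fun p => ((p.1 ⊆ p.2 ∧ p.1 ≠ ∅) ∧ p.2 ≠ Finset.univ) ∧ p.1 ≠ p.2)).card := by
    apply Finset.card_bij (fun p _ => (eb n p.1, eb n p.2))
    · rintro p hp
      rw [Finset.mem_filter, Finset.mem_product] at hp
      obtain ⟨⟨hp1, hp2⟩, hd, hne⟩ := hp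
      obtain ⟨l1, n1, t1⟩ := hmem _ hp1
      obtain ⟨l2, n2, t2⟩ := hmem _ hp2
      rw [Finset.mem_filter]
      refine ⟨by simp [U, Finset.mem_product], ⟨⟨dom_iff_subset.1 hd, ?_⟩, ?_⟩, ?_⟩
      · intro hc
        exact n1 (eb_inj l1 (by positivity) (hc.trans eb_zero.symm))
      · intro hc
        exact t2 (eb_inj l2 (by omega) (hc.trans eb_top.symm))
      · intro hc
        exact hne (eb_inj l1 l2 hc)
    · rintro p hp q hq hpq
      rw [Finset.mem_filter, Finset.mem_product] at hp hq
      obtain ⟨l1, _, _⟩ := hmem _ hp.1.1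
      obtain ⟨l2, _, _⟩ := hmem _ hp.1.2
      obtain ⟨l3, _, _⟩ := hmem _ hq.1.1
      obtain ⟨l4, _, _⟩ := hmem _ hq.1.2
      obtain ⟨e1, e2⟩ := Prod.ext_iff.1 hpq
      exact Prod.ext (eb_inj l1 l3 e1) (eb_inj l2 l4 e2)
    · rintro ⟨a, b⟩ hb
      rw [Finset.mem_filter] at hb
      obtain ⟨_, ⟨⟨hsub, hane⟩, hbne⟩, hab⟩ := hb
      obtain ⟨h₁, hl1, he1⟩ := eb_surj a
      obtain ⟨h₂, hl2, he2⟩ := eb_surj b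
      have haneu : a ≠ Finset.univ := by
        intro hc
        exact hbne (Finset.Subset.antisymm (Finset.subset_univ _) (hc ▸ hsub))
      have hm1 : h₁ ∈ Finset.Icc 1 (2 ^ n - 2) := by
        rw [Finset.mem_Icc]
        have hne0 : h₁ ≠ 0 := fun hc => hane (by rw [← he1, hc, eb_zero])
        have hnet : h₁ ≠ 2 ^ n - 1 := fun hc => haneu (by rw [← he1, hc, eb_top])
        omega
      have hm2 : h₂ ∈ Finset.Icc 1 (2 ^ n - 2) := by
        rw [Finset.mem_Icc]
        have hne0 : h₂ ≠ 0 := by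
          intro hc
          rw [hc, eb_zero] at he2
          exact hane (Finset.subset_empty.1 (he2 ▸ hsub))
        have hnet : h₂ ≠ 2 ^ n - 1 := fun hc => hbne (by rw [← he2, hc, eb_top])
        omega
      refine ⟨(h₁, h₂), ?_, by simp [he1, he2]⟩
      rw [Finset.mem_filter, Finset.mem_product]
      refine ⟨⟨hm1, hm2⟩, dom_iff_subset.2 (by rw [he1, he2]; exact hsub), ?_⟩
      intro hc
      exact hab (show a = b by rw [← he1, ← he2]; exact congrArg (eb n) hc)
  rw [hcard]
  exact cardA3 (by omega)

open scoped Classical in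
lemma cardC (hn : 3 ≤ n) :
    (((Finset.Icc 1 (2 ^ n - 2)).powersetCard 2).filter
      (fun s => ¬ ∀ h ∈ s, ∀ ℓ ∈ s, h ≠ ℓ → ¬ Dom n h ℓ ∧ ¬ Dom n ℓ h)).card
      + 3 * 2 ^ n = 3 ^ n + 3 := by
  have h8 : 8 ≤ 2 ^ n := by
    calc 8 = 2 ^ 3 := rfl
    _ ≤ 2 ^ n := Nat.pow_le_pow_right (by norm_num) hn
  have hlt : ∀ h ∈ Finset.Icc 1 (2 ^ n - 2), h < 2 ^ n := by
    intro h hh; rw [Finset.mem_Icc] at hh; omega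
  have hcard : (((Finset.Icc 1 (2 ^ n - 2)) ×ˢ (Finset.Icc 1 (2 ^ n - 2))).filter
      (fun p => Dom n p.1 p.2 ∧ p.1 ≠ p.2)).card =
      (((Finset.Icc 1 (2 ^ n - 2)).powersetCard 2).filter
        (fun s => ¬ ∀ h ∈ s, ∀ ℓ ∈ s, h ≠ ℓ → ¬ Dom n h ℓ ∧ ¬ Dom n ℓ h)).card := by
    apply Finset.card_bij (fun p _ => ({p.1, p.2} : Finset ℕ))
    · rintro p hp
      rw [Finset.mem_filter, Finset.mem_product] at hp
      obtain ⟨⟨hp1, hp2⟩, hd, hne⟩ := hp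
      rw [Finset.mem_filter, Finset.mem_powersetCard]
      refine ⟨⟨?_, Finset.card_pair hne⟩, ?_⟩
      · intro x hx
        rcases Finset.mem_insert.1 hx with h | h
        · exact h ▸ hp1
        · exact (Finset.mem_singleton.1 h) ▸ hp2
      · intro hP
        exact (hP p.1 (by simp) p.2 (by simp) hne).1 hd
    · rintro p hp q hq hpq
      rw [Finset.mem_filter, Finset.mem_product] at hp hq
      obtain ⟨⟨hp1, hp2⟩, hdp, hnep⟩ := hp
      obtain ⟨⟨hq1, hq2⟩, hdq, hneq⟩ := hq
      have m1 : p.1 ∈ ({q.1, q.2} : Finset ℕ) := hpq ▸ (by simp)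
      have m2 : p.2 ∈ ({q.1, q.2} : Finset ℕ) := hpq ▸ (by simp)
      simp only [Finset.mem_insert, Finset.mem_singleton] at m1 m2
      rcases m1 with e1 | e1
      · rcases m2 with e2 | e2
        · exact absurd (e1.trans e2.symm) hnep
        · exact Prod.ext e1 e2
      · rcases m2 with e2 | e2
        · -- p.1 = q.2, p.2 = q.1 : Dom p.1 p.2 and Dom q.1 q.2 = Dom p.2 p.1
          have hdq' : Dom n p.2 p.1 := by rw [e1, e2]; exact hdq
          exact absurd (dom_antisymm (hlt _ hp1) (hlt _ hp2) hdp hdq') hnep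
        · exact absurd (e1.trans e2.symm) hnep
    · rintro s hs
      rw [Finset.mem_filter, Finset.mem_powersetCard] at hs
      obtain ⟨⟨hsub, hcard2⟩, hnP⟩ := hs
      push_neg at hnP
      obtain ⟨h, hhs, ℓ, hls, hne, hor⟩ := hnP
      have hset : ∀ a b : ℕ, a ∈ s → b ∈ s → a ≠ b → ({a, b} : Finset ℕ) = s := by
        intro a b ha hb hab
        apply Finset.eq_of_subset_of_card_le
        · intro x hx
          rcases Finset.mem_insert.1 hx with h' | h'
          · exact h' ▸ ha
          · exact (Finset.mem_singleton.1 h') ▸ hb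
        · rw [hcard2, Finset.card_pair hab]
      by_cases hd : Dom n h ℓ
      · refine ⟨(h, ℓ), ?_, hset _ _ hhs hls hne⟩
        rw [Finset.mem_filter, Finset.mem_product]
        exact ⟨⟨hsub hhs, hsub hls⟩, hd, hne⟩
      · refine ⟨(ℓ, h), ?_, hset _ _ hls hhs hne.symm⟩
        rw [Finset.mem_filter, Finset.mem_product]
        exact ⟨⟨hsub hls, hsub hhs⟩, hor hd, hne.symm⟩
  rw [← hcard]
  exact cardO hn

open scoped Classical in
/-- For `n ≥ 3`, the number of unordered pairs of distinct elements of
`{1,…,2^n-2}` that are incomparable for the domination order equals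
`2^{n-1}(2^n+1) - 3^n`. -/
theorem statement8 (n : ℕ) (hn : 3 ≤ n) :
    (((Finset.Icc 1 (2^n - 2)).powersetCard 2).filter
        (fun s => ∀ h ∈ s, ∀ ℓ ∈ s, h ≠ ℓ → ¬ Dom n h ℓ ∧ ¬ Dom n ℓ h)).card =
      2^(n-1) * (2^n + 1) - 3^n := by
  have hsplit :
      (((Finset.Icc 1 (2^n - 2)).powersetCard 2).filter
        (fun s => ∀ h ∈ s, ∀ ℓ ∈ s, h ≠ ℓ → ¬ Dom n h ℓ ∧ ¬ Dom n ℓ h)).card +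
      (((Finset.Icc 1 (2^n - 2)).powersetCard 2).filter
        (fun s => ¬ ∀ h ∈ s, ∀ ℓ ∈ s, h ≠ ℓ → ¬ Dom n h ℓ ∧ ¬ Dom n ℓ h)).card =
      ((Finset.Icc 1 (2^n - 2)).powersetCard 2).card := by
    rw [← Finset.card_union_of_disjoint (Finset.disjoint_filter_filter_not _ _ _),
      Finset.filter_union_filter_not_eq]
  have hC := cardC hn
  have hT : ((Finset.Icc 1 (2^n - 2)).powersetCard 2).card = (2^n - 2).choose 2 := by
    rw [Finset.card_powersetCard, Nat.card_Icc, Nat.add_sub_cancel]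
  obtain ⟨k, hk⟩ : ∃ k, 2^(n-1) = k + 4 := by
    refine ⟨2^(n-1) - 4, ?_⟩
    have h4 : (4:ℕ) ≤ 2^(n-1) := by
      calc (4:ℕ) = 2^2 := rfl
      _ ≤ 2^(n-1) := Nat.pow_le_pow_right (by norm_num) (by omega)
    omega
  have hp : 2 ^ n = 2 ^ (n-1) * 2 := by
    rw [← pow_succ]
    congr 1
    omega
  have h2n : 2^n = 2*(k+4) := by rw [hp, hk]; ring
  have hchoose : (2^n - 2).choose 2 = (k+3) * (2*k+5) := by
    rw [Nat.choose_two_right, h2n]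
    rw [show 2*(k+4) - 2 = 2*(k+3) by omega, show 2*(k+3) - 1 = 2*k+5 by omega]
    rw [show 2*(k+3)*(2*k+5) = 2*((k+3)*(2*k+5)) by ring,
      Nat.mul_div_cancel_left _ (by norm_num : 0 < 2)]
  have hY : 2^(n-1) * (2^n + 1) = (k+4)*(2*k+9) := by rw [hk, h2n]; ring
  have hXY : (k+3)*(2*k+5) + 6*(k+4) = (k+4)*(2*k+9) + 3 := by ring
  rw [hT, hchoose] at hsplit
  rw [hY]
  generalize hR : (3:ℕ)^n = R at hC ⊢
  generalize hX : (k+3)*(2*k+5) = X at hsplit hXY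
  generalize hYv : (k+4)*(2*k+9) = Y at hXY ⊢
  omega
end

section
/- Let $n \geq 3$, $N = 2^n - 1$, and for each prime $p$ let $E_n$ be the set of pairs $(k,\ell)$ of distinct elements of $\{1,\dots,N-1\}$ incomparable for $\preceq$. Then for real $x$ with $0 < x < 1$: $\sum_{(\nu_1,\dots,\nu_N) \in \mathbb{Z}_{\geq 0}^N,\ \nu_k\nu_\ell = 0\ \forall (k,\ell)\in E_n} x^{\nu_1 + \cdots + \nu_N} = \sum_{(k_1,\dots,k_n)\in\mathbb{Z}_{\geq 0}^n} x^{\max_j k_j}$. -/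
namespace St11

instance (n h ℓ : ℕ) : Decidable (Dom n h ℓ) := by
  unfold Dom; exact Nat.decidableBallLT n _

lemma epsb_le_one (h j : ℕ) : epsb h j ≤ 1 := by
  unfold epsb; split <;> omega

lemma dom_refl (n a : ℕ) : Dom n a a := fun j _ => le_refl _

lemma dom_testBit {n a b : ℕ} (hd : Dom n a b) {j : ℕ} (hj : j < n)
    (hb : a.testBit j = true) : b.testBit j = true := by
  have h := hd j hj
  unfold epsb at h
  rw [if_pos hb] at h
  by_contra hc
  simp only [Bool.not_eq_true] at hc
  rw [if_neg (by simp [hc])] at h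
  omega

lemma dom_of_testBit {n a b : ℕ}
    (H : ∀ j < n, a.testBit j = true → b.testBit j = true) : Dom n a b := by
  intro j hj
  unfold epsb
  by_cases h1 : a.testBit j
  · rw [if_pos h1, if_pos (H j hj h1)]
  · rw [if_neg h1]; exact Nat.zero_le _

lemma not_dom {n a b : ℕ} (h : ¬ Dom n a b) :
    ∃ j, j < n ∧ a.testBit j = true ∧ b.testBit j = false := by
  unfold Dom at h
  push_neg at h
  obtain ⟨j, hj, hlt⟩ := h
  refine ⟨j, hj, ?_, ?_⟩
  · by_contra hc
    simp only [Bool.not_eq_true] at hc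
    simp [epsb, hc] at hlt
  · by_contra hc
    simp only [Bool.not_eq_false] at hc
    simp only [epsb, hc, if_true] at hlt
    have := epsb_le_one a j
    unfold epsb at this
    omega

lemma dom_le {n a b : ℕ} (ha : a < 2^n) (hb : b < 2^n) (hd : Dom n a b) : a ≤ b := by
  have key : a &&& b = a := by
    apply Nat.eq_of_testBit_eq
    intro i
    rw [Nat.testBit_and]
    by_cases hi : i < n
    · cases hA : a.testBit i
      · simp
      · simp [dom_testBit hd hi hA]
    · have : a.testBit i = false :=
        Nat.testBit_lt_two_pow (lt_of_lt_of_le ha (Nat.pow_le_pow_right (by norm_num) (le_of_not_gt hi)))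
      simp [this]
  calc a = a &&& b := key.symm
    _ ≤ b := Nat.and_le_right

lemma dom_antisymm {n a b : ℕ} (ha : a < 2^n) (hb : b < 2^n)
    (h1 : Dom n a b) (h2 : Dom n b a) : a = b :=
  le_antisymm (dom_le ha hb h1) (dom_le hb ha h2)

lemma exists_bit {a : ℕ} (ha : a ≠ 0) : ∃ j, a.testBit j = true := by
  by_contra hc
  push_neg at hc
  apply ha
  apply Nat.eq_of_testBit_eq
  intro i
  simp only [Nat.zero_testBit]
  exact Bool.not_eq_true _ ▸ hc i

lemma bit_lt {n a j : ℕ} (ha : a < 2^n) (hj : a.testBit j = true) : j < n := by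
  by_contra hc
  have : a.testBit j = false :=
    Nat.testBit_lt_two_pow (lt_of_lt_of_le ha (Nat.pow_le_pow_right (by norm_num) (le_of_not_gt hc)))
  rw [this] at hj; exact Bool.noConfusion hj

lemma dom_top (n a : ℕ) : Dom n a (2^n - 1) := by
  apply dom_of_testBit
  intro j hj _
  simp [Nat.testBit_two_pow_sub_one, hj]

lemma fsucc_lt {n : ℕ} (h : Fin (2^n - 1)) : h.1 + 1 < 2^n := by
  have h1 := h.2
  have h2 : 1 ≤ 2^n := Nat.one_le_two_pow
  omega

/-! ### The maps -/

/-- support is a chain -/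
def chainS (n : ℕ) (ν : Fin (2^n - 1) → ℕ) : Prop :=
  ∀ h ℓ : Fin (2^n - 1), ν h ≠ 0 → ν ℓ ≠ 0 →
    Dom n (h.1+1) (ℓ.1+1) ∨ Dom n (ℓ.1+1) (h.1+1)

def Fm (n : ℕ) (ν : Fin (2^n - 1) → ℕ) : Fin n → ℕ :=
  fun j => ∑ h, epsb (h.1+1) j.1 * ν h

def sset (n : ℕ) (k : Fin n → ℕ) (t : ℕ) : ℕ :=
  ∑ j : Fin n, if t ≤ k j then 2^(j.1) else 0

def Gm (n : ℕ) (k : Fin n → ℕ) : Fin (2^n - 1) → ℕ := fun h =>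
  ((Finset.Icc 1 (Finset.univ.sup k)).filter (fun t => sset n k t = h.1+1)).card

def Dstr (n : ℕ) (ν : Fin (2^n - 1) → ℕ) (h : Fin (2^n - 1)) : ℕ :=
  ∑ ℓ, if Dom n (h.1+1) (ℓ.1+1) ∧ ℓ ≠ h then ν ℓ else 0

/-! ### indicator sums of powers of two -/

lemma indsum_lt (m : ℕ) (P : ℕ → Prop) [DecidablePred P] :
    (∑ j ∈ Finset.range m, if P j then 2^j else 0) < 2^m := by
  induction m with
  | zero => simp
  | succ m ih =>
    rw [Finset.sum_range_succ]
    have h1 : (if P m then 2^m else 0) ≤ 2^m := by split <;> simp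
    have h2 : 2^(m+1) = 2^m + 2^m := by rw [pow_succ]; ring
    calc (∑ j ∈ Finset.range m, if P j then 2^j else 0) + (if P m then 2^m else 0)
        < 2^m + 2^m := Nat.add_lt_add_of_lt_of_le ih h1
      _ = 2^(m+1) := h2.symm

lemma testBit_indsum (m : ℕ) (P : ℕ → Prop) [DecidablePred P] (i : ℕ) :
    (∑ j ∈ Finset.range m, if P j then 2^j else 0).testBit i = true ↔ (i < m ∧ P i) := by
  induction m with
  | zero => simp [Nat.zero_testBit]
  | succ m ih =>
    rw [Finset.sum_range_succ]
    by_cases hP : P m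
    · rw [if_pos hP]
      have haLT : (∑ j ∈ Finset.range m, if P j then 2^j else 0) < 2^m := indsum_lt m P
      rcases lt_trichotomy i m with hi | rfl | hi
      · rw [Nat.add_comm, Nat.testBit_two_pow_add_gt hi, ih]
        constructor <;> rintro ⟨h1, h2⟩ <;> exact ⟨by omega, h2⟩
      · rw [Nat.add_comm, Nat.testBit_two_pow_add_eq, Nat.testBit_lt_two_pow haLT]
        simpa using hP
      · have hlt : (∑ j ∈ Finset.range m, if P j then 2^j else 0) + 2^m < 2^i := by
          have h2 : 2^(m+1) = 2^m + 2^m := by rw [pow_succ]; ring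
          have h3 : 2^(m+1) ≤ 2^i := Nat.pow_le_pow_right (by norm_num) (by omega)
          omega
        rw [Nat.testBit_lt_two_pow hlt]
        constructor
        · intro hc; exact Bool.noConfusion hc
        · rintro ⟨h1, _⟩; omega
    · rw [if_neg hP, add_zero, ih]
      constructor
      · rintro ⟨h1, h2⟩; exact ⟨by omega, h2⟩
      · rintro ⟨h1, h2⟩
        refine ⟨?_, h2⟩
        rcases Nat.lt_succ_iff_lt_or_eq.mp h1 with h | rfl
        · exact h
        · exact absurd h2 hP

/-- extension of `k` to `ℕ` -/
def kext {n : ℕ} (k : Fin n → ℕ) (j : ℕ) : ℕ := if hj : j < n then k ⟨j, hj⟩ else 0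

lemma sset_eq_indsum {n : ℕ} (k : Fin n → ℕ) (t : ℕ) :
    sset n k t = ∑ j ∈ Finset.range n, if t ≤ kext k j then 2^j else 0 := by
  rw [← Fin.sum_univ_eq_sum_range (fun j => if t ≤ kext k j then 2^j else 0) n]
  unfold sset
  apply Finset.sum_congr rfl
  intro j _
  have : kext k j.1 = k j := by simp [kext, j.2]
  rw [this]

lemma sset_lt {n : ℕ} (k : Fin n → ℕ) (t : ℕ) : sset n k t < 2^n := by
  rw [sset_eq_indsum]; exact indsum_lt n _

lemma testBit_sset {n : ℕ} {k : Fin n → ℕ} {t : ℕ} {j : ℕ} (hj : j < n) :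
    (sset n k t).testBit j = true ↔ t ≤ k ⟨j, hj⟩ := by
  rw [sset_eq_indsum, testBit_indsum]
  simp [kext, hj]

lemma sset_pos {n : ℕ} (hn : 0 < n) (k : Fin n → ℕ) {t : ℕ}
    (ht : t ≤ Finset.univ.sup k) : 1 ≤ sset n k t := by
  have hne : (Finset.univ : Finset (Fin n)).Nonempty := ⟨⟨0, hn⟩, Finset.mem_univ _⟩
  obtain ⟨j, _, hj⟩ := Finset.exists_mem_eq_sup Finset.univ hne k
  have htk : t ≤ k j := by rw [← hj]; exact ht
  have : (if t ≤ k j then 2^(j.1) else 0) ≤ sset n k t := by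
    unfold sset
    exact Finset.single_le_sum (f := fun i => if t ≤ k i then 2^(i.1) else 0)
      (fun i _ => Nat.zero_le _) (Finset.mem_univ j)
  rw [if_pos htk] at this
  calc 1 ≤ 2^(j.1) := Nat.one_le_two_pow
    _ ≤ sset n k t := this

/-! ### basic sum lemmas -/

lemma dstr_add {n : ℕ} (ν : Fin (2^n - 1) → ℕ) (h : Fin (2^n - 1)) :
    Dstr n ν h + ν h = ∑ ℓ, if Dom n (h.1+1) (ℓ.1+1) then ν ℓ else 0 := by
  unfold Dstr
  rw [← Finset.sum_erase_add Finset.univ _ (Finset.mem_univ h),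
      ← Finset.sum_erase_add Finset.univ
        (fun ℓ => if Dom n (h.1+1) (ℓ.1+1) then ν ℓ else 0) (Finset.mem_univ h)]
  simp only [if_pos (dom_refl n (h.1+1)), ne_eq, not_true_eq_false, and_false, if_false, add_zero]
  congr 1
  apply Finset.sum_congr rfl
  intro ℓ hℓ
  have hne : ℓ ≠ h := (Finset.mem_erase.mp hℓ).1
  simp [hne]

lemma dfull_le {n : ℕ} (ν : Fin (2^n - 1) → ℕ) (h : Fin (2^n - 1)) :
    Dstr n ν h + ν h ≤ ∑ ℓ, ν ℓ := by
  rw [dstr_add]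
  apply Finset.sum_le_sum
  intro ℓ _
  split <;> simp

lemma Fm_le_total {n : ℕ} (ν : Fin (2^n - 1) → ℕ) (j : Fin n) :
    Fm n ν j ≤ ∑ h, ν h := by
  unfold Fm
  apply Finset.sum_le_sum
  intro ℓ _
  calc epsb (ℓ.1+1) j.1 * ν ℓ ≤ 1 * ν ℓ := Nat.mul_le_mul_right _ (epsb_le_one _ _)
    _ = ν ℓ := one_mul _

lemma sup_Fm {n : ℕ} {ν : Fin (2^n - 1) → ℕ} (cs : chainS n ν) :
    Finset.univ.sup (Fm n ν) = ∑ h, ν h := by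
  apply le_antisymm
  · exact Finset.sup_le fun j _ => Fm_le_total ν j
  · by_cases hz : ∀ h, ν h = 0
    · have h0 : ∑ h, ν h = 0 := Finset.sum_eq_zero fun h _ => hz h
      rw [h0]; exact Nat.zero_le _
    · push_neg at hz
      obtain ⟨h0, h0ne⟩ := hz
      have hne : (Finset.univ.filter (fun h => ν h ≠ 0)).Nonempty :=
        ⟨h0, by simp [h0ne]⟩
      obtain ⟨m, hmT, hmin⟩ :=
        Finset.exists_min_image (Finset.univ.filter (fun h => ν h ≠ 0)) (fun h => h.1) hne
      have hmν : ν m ≠ 0 := (Finset.mem_filter.mp hmT).2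
      have hdom : ∀ ℓ, ν ℓ ≠ 0 → Dom n (m.1+1) (ℓ.1+1) := by
        intro ℓ hℓ
        rcases cs m ℓ hmν hℓ with hd | hd
        · exact hd
        · have h1 : ℓ.1+1 ≤ m.1+1 := dom_le (fsucc_lt ℓ) (fsucc_lt m) hd
          have h2 : m.1 ≤ ℓ.1 := hmin ℓ (by simp [hℓ])
          have : ℓ = m := Fin.ext (by omega)
          rw [this]; exact dom_refl n _
      obtain ⟨j, hbj⟩ := exists_bit (show m.1+1 ≠ 0 by omega)
      have hjn : j < n := bit_lt (fsucc_lt m) hbj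
      have heq : Fm n ν ⟨j, hjn⟩ = ∑ h, ν h := by
        unfold Fm
        apply Finset.sum_congr rfl
        intro ℓ _
        by_cases hν : ν ℓ = 0
        · simp [hν]
        · have := dom_testBit (hdom ℓ hν) hjn hbj
          simp [epsb, this]
      calc ∑ h, ν h = Fm n ν ⟨j, hjn⟩ := heq.symm
        _ ≤ _ := Finset.le_sup (Finset.mem_univ _)

/-! ### the key interval lemma -/

lemma key {n : ℕ} {ν : Fin (2^n - 1) → ℕ} (cs : chainS n ν) (h : Fin (2^n - 1)) {t : ℕ}
    (ht1 : 1 ≤ t) :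
    sset n (Fm n ν) t = h.1 + 1 ↔ Dstr n ν h < t ∧ t ≤ Dstr n ν h + ν h := by
  constructor
  · intro hs
    have hA1 : t ≤ Dstr n ν h + ν h := by
      rw [dstr_add]
      obtain ⟨j, hjn, hbj, hj3⟩ : ∃ j, j < n ∧ (h.1+1).testBit j = true ∧
          ∀ ℓ : Fin (2^n - 1), ν ℓ ≠ 0 → (ℓ.1+1).testBit j = true →
            Dom n (h.1+1) (ℓ.1+1) := by
        by_cases hT : ∀ ℓ : Fin (2^n - 1), ν ℓ ≠ 0 → Dom n (h.1+1) (ℓ.1+1)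
        · obtain ⟨j, hbj⟩ := exists_bit (show h.1+1 ≠ 0 by omega)
          exact ⟨j, bit_lt (fsucc_lt h) hbj, hbj, fun ℓ hℓ _ => hT ℓ hℓ⟩
        · push_neg at hT
          have hTne : (Finset.univ.filter
              (fun ℓ => ν ℓ ≠ 0 ∧ ¬ Dom n (h.1+1) (ℓ.1+1))).Nonempty := by
            obtain ⟨ℓ, h1, h2⟩ := hT
            exact ⟨ℓ, by simp [h1, h2]⟩
          obtain ⟨m, hmT, hmax⟩ := Finset.exists_max_image _ (fun ℓ => ℓ.1) hTne
          have hmSpec := (Finset.mem_filter.mp hmT).2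
          have hdomm : ∀ ℓ : Fin (2^n - 1), ν ℓ ≠ 0 → ¬ Dom n (h.1+1) (ℓ.1+1) →
              Dom n (ℓ.1+1) (m.1+1) := by
            intro ℓ h1 h2
            rcases cs ℓ m h1 hmSpec.1 with hd | hd
            · exact hd
            · have hle : m.1+1 ≤ ℓ.1+1 := dom_le (fsucc_lt m) (fsucc_lt ℓ) hd
              have hge : ℓ.1 ≤ m.1 := hmax ℓ (by simp [h1, h2])
              have : ℓ = m := Fin.ext (by omega)
              rw [this]; exact dom_refl n _
          obtain ⟨j, hjn, hbj, hbm⟩ := not_dom hmSpec.2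
          refine ⟨j, hjn, hbj, fun ℓ hℓν hbℓ => ?_⟩
          by_contra hnd
          have := dom_testBit (hdomm ℓ hℓν hnd) hjn hbℓ
          rw [hbm] at this
          exact Bool.noConfusion this
      have ht_le : t ≤ Fm n ν ⟨j, hjn⟩ := by
        apply (testBit_sset hjn).mp
        rw [hs]; exact hbj
      refine le_trans ht_le ?_
      unfold Fm
      apply Finset.sum_le_sum
      intro ℓ _
      by_cases hν : ν ℓ = 0
      · simp [hν]
      · by_cases hb : (ℓ.1+1).testBit j = true
        · rw [if_pos (hj3 ℓ hν hb)]
          calc epsb (ℓ.1+1) j * ν ℓ ≤ 1 * ν ℓ := Nat.mul_le_mul_right _ (epsb_le_one _ _)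
            _ = ν ℓ := one_mul _
        · simp only [Bool.not_eq_true] at hb
          simp [epsb, hb]
    have hA2 : Dstr n ν h < t := by
      by_contra hc
      push_neg at hc
      have hDpos : Dstr n ν h ≠ 0 := by omega
      obtain ⟨ℓ0, _, hℓ0⟩ := Finset.exists_ne_zero_of_sum_ne_zero hDpos
      have hc0 : ν ℓ0 ≠ 0 ∧ Dom n (h.1+1) (ℓ0.1+1) ∧ ℓ0 ≠ h := by
        by_cases hd : Dom n (h.1+1) (ℓ0.1+1) ∧ ℓ0 ≠ h
        · rw [if_pos hd] at hℓ0; exact ⟨hℓ0, hd.1, hd.2⟩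
        · rw [if_neg hd] at hℓ0; exact absurd rfl hℓ0
      have hTne : (Finset.univ.filter
          (fun ℓ => ν ℓ ≠ 0 ∧ Dom n (h.1+1) (ℓ.1+1) ∧ ℓ ≠ h)).Nonempty :=
        ⟨ℓ0, by simp [hc0.1, hc0.2.1, hc0.2.2]⟩
      obtain ⟨m, hmT, hmin⟩ := Finset.exists_min_image _ (fun ℓ => ℓ.1) hTne
      have hmSpec := (Finset.mem_filter.mp hmT).2
      have hdomm : ∀ ℓ : Fin (2^n - 1), ν ℓ ≠ 0 → Dom n (h.1+1) (ℓ.1+1) → ℓ ≠ h →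
          Dom n (m.1+1) (ℓ.1+1) := by
        intro ℓ h1 h2 h3
        rcases cs m ℓ hmSpec.1 h1 with hd | hd
        · exact hd
        · have hle : ℓ.1+1 ≤ m.1+1 := dom_le (fsucc_lt ℓ) (fsucc_lt m) hd
          have hge : m.1 ≤ ℓ.1 := hmin ℓ (by simp [h1, h2, h3])
          have : ℓ = m := Fin.ext (by omega)
          rw [this]; exact dom_refl n _
      obtain ⟨j, hjn, hbm, hbh⟩ : ∃ j, j < n ∧ (m.1+1).testBit j = true ∧
          (h.1+1).testBit j = false := by
        by_contra hno
        push_neg at hno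
        have hmh : Dom n (m.1+1) (h.1+1) := by
          apply dom_of_testBit
          intro j hj hb
          have := hno j hj hb
          simp only [Bool.not_eq_false] at this
          exact this
        have : h.1+1 = m.1+1 :=
          dom_antisymm (fsucc_lt h) (fsucc_lt m) hmSpec.2.1 hmh
        exact hmSpec.2.2 (Fin.ext (by omega))
      have hk : Dstr n ν h ≤ Fm n ν ⟨j, hjn⟩ := by
        unfold Dstr Fm
        apply Finset.sum_le_sum
        intro ℓ _
        by_cases hν : ν ℓ = 0
        · simp [hν]
        · by_cases hcond : Dom n (h.1+1) (ℓ.1+1) ∧ ℓ ≠ h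
          · rw [if_pos hcond]
            have hb : (ℓ.1+1).testBit j = true :=
              dom_testBit (hdomm ℓ hν hcond.1 hcond.2) hjn hbm
            simp [epsb, hb]
          · rw [if_neg hcond]; exact Nat.zero_le _
      have htk : t ≤ Fm n ν ⟨j, hjn⟩ := le_trans hc hk
      have hbit : (sset n (Fm n ν) t).testBit j = true := (testBit_sset hjn).mpr htk
      rw [hs, hbh] at hbit
      exact Bool.noConfusion hbit
    exact ⟨hA2, hA1⟩
  · rintro ⟨hgt, hle⟩
    have hνh : ν h ≠ 0 := by omega
    apply Nat.eq_of_testBit_eq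
    intro i
    by_cases hin : i < n
    · cases hbh : (h.1+1).testBit i with
      | true =>
        apply (testBit_sset hin).mpr
        have hD : Dstr n ν h + ν h ≤ Fm n ν ⟨i, hin⟩ := by
          rw [dstr_add]
          unfold Fm
          apply Finset.sum_le_sum
          intro ℓ _
          by_cases hd : Dom n (h.1+1) (ℓ.1+1)
          · rw [if_pos hd]
            have := dom_testBit hd hin hbh
            simp [epsb, this]
          · rw [if_neg hd]; exact Nat.zero_le _
        exact le_trans hle hD
      | false =>
        have hki : Fm n ν ⟨i, hin⟩ ≤ Dstr n ν h := by
          unfold Fm Dstr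
          apply Finset.sum_le_sum
          intro ℓ _
          by_cases hν : ν ℓ = 0
          · simp [hν]
          · by_cases hb : (ℓ.1+1).testBit i = true
            · have hdom : Dom n (h.1+1) (ℓ.1+1) := by
                rcases cs ℓ h hν hνh with hd | hd
                · exfalso
                  have := dom_testBit hd hin hb
                  rw [hbh] at this
                  exact Bool.noConfusion this
                · exact hd
              have hne : ℓ ≠ h := by
                rintro rfl
                rw [hb] at hbh
                exact Bool.noConfusion hbh
              rw [if_pos ⟨hdom, hne⟩]
              calc epsb (ℓ.1+1) i * ν ℓ ≤ 1 * ν ℓ := Nat.mul_le_mul_right _ (epsb_le_one _ _)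
                _ = ν ℓ := one_mul _
            · simp only [Bool.not_eq_true] at hb
              simp [epsb, hb]
        have hnt : ¬ t ≤ Fm n ν ⟨i, hin⟩ := by omega
        have hfalse : (sset n (Fm n ν) t).testBit i = false := by
          by_contra hc
          simp only [Bool.not_eq_false] at hc
          exact hnt ((testBit_sset hin).mp hc)
        rw [hfalse]
    · have hni : n ≤ i := le_of_not_gt hin
      have h1 : (sset n (Fm n ν) t).testBit i = false :=
        Nat.testBit_lt_two_pow (lt_of_lt_of_le (sset_lt _ _)
          (Nat.pow_le_pow_right (by norm_num) hni))
      have h2 : (h.1+1).testBit i = false :=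
        Nat.testBit_lt_two_pow (lt_of_lt_of_le (fsucc_lt h)
          (Nat.pow_le_pow_right (by norm_num) hni))
      rw [h1, h2]

/-! ### the two compositions -/

lemma Gm_Fm {n : ℕ} {ν : Fin (2^n - 1) → ℕ} (cs : chainS n ν) : Gm n (Fm n ν) = ν := by
  funext h
  unfold Gm
  rw [sup_Fm cs]
  have hset : (Finset.Icc 1 (∑ h, ν h)).filter (fun t => sset n (Fm n ν) t = h.1+1)
      = Finset.Ioc (Dstr n ν h) (Dstr n ν h + ν h) := by
    ext t
    simp only [Finset.mem_filter, Finset.mem_Icc, Finset.mem_Ioc]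
    constructor
    · rintro ⟨⟨h1, _⟩, h3⟩
      exact (key cs h h1).mp h3
    · rintro ⟨h1, h2⟩
      have ht1 : 1 ≤ t := by omega
      have hDle : Dstr n ν h + ν h ≤ ∑ ℓ, ν ℓ := dfull_le ν h
      exact ⟨⟨ht1, le_trans h2 hDle⟩, (key cs h ht1).mpr ⟨h1, h2⟩⟩
  rw [hset, Nat.card_Ioc]
  omega

lemma chain_Gm {n : ℕ} (k : Fin n → ℕ) : chainS n (Gm n k) := by
  intro h ℓ hh hℓ
  have hwit : ∀ a : Fin (2^n - 1), Gm n k a ≠ 0 →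
      ∃ t, t ∈ Finset.Icc 1 (Finset.univ.sup k) ∧ sset n k t = a.1+1 := by
    intro a ha
    have : ((Finset.Icc 1 (Finset.univ.sup k)).filter
        (fun t => sset n k t = a.1+1)).Nonempty := Finset.card_ne_zero.mp ha
    obtain ⟨t, ht⟩ := this
    rw [Finset.mem_filter] at ht
    exact ⟨t, ht.1, ht.2⟩
  obtain ⟨t, _, hst⟩ := hwit h hh
  obtain ⟨t', _, hst'⟩ := hwit ℓ hℓ
  rcases le_total t t' with hle | hle
  · right
    apply dom_of_testBit
    intro j hj hb
    rw [← hst'] at hb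
    rw [← hst]
    rw [testBit_sset hj] at hb ⊢
    omega
  · left
    apply dom_of_testBit
    intro j hj hb
    rw [← hst] at hb
    rw [← hst']
    rw [testBit_sset hj] at hb ⊢
    omega

lemma Fm_Gm {n : ℕ} (hn : 0 < n) (k : Fin n → ℕ) : Fm n (Gm n k) = k := by
  funext j
  have hkM : k j ≤ Finset.univ.sup k := Finset.le_sup (Finset.mem_univ j)
  have step1 : Fm n (Gm n k) j
      = ∑ t ∈ Finset.Icc 1 (Finset.univ.sup k), if t ≤ k j then 1 else 0 := by
    unfold Fm Gm
    calc ∑ h : Fin (2^n - 1), epsb (h.1+1) j.1 *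
          ((Finset.Icc 1 (Finset.univ.sup k)).filter (fun t => sset n k t = h.1+1)).card
        = ∑ h : Fin (2^n - 1), ∑ t ∈ Finset.Icc 1 (Finset.univ.sup k),
            (if sset n k t = h.1+1 then epsb (h.1+1) j.1 else 0) := by
          apply Finset.sum_congr rfl
          intro h _
          rw [Finset.card_filter, Finset.mul_sum]
          apply Finset.sum_congr rfl
          intro t _
          rw [mul_ite, mul_one, mul_zero]
      _ = ∑ t ∈ Finset.Icc 1 (Finset.univ.sup k), ∑ h : Fin (2^n - 1),
            (if sset n k t = h.1+1 then epsb (h.1+1) j.1 else 0) := Finset.sum_comm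
      _ = ∑ t ∈ Finset.Icc 1 (Finset.univ.sup k), if t ≤ k j then 1 else 0 := by
          apply Finset.sum_congr rfl
          intro t ht
          rw [Finset.mem_Icc] at ht
          have h1 : 1 ≤ sset n k t := sset_pos hn k ht.2
          have h2 : sset n k t < 2^n := sset_lt k t
          have hlt : sset n k t - 1 < 2^n - 1 := by omega
          set h0 : Fin (2^n - 1) := ⟨sset n k t - 1, hlt⟩ with hh0
          have hcond : ∀ h : Fin (2^n - 1), (sset n k t = h.1+1) ↔ h = h0 := by
            intro h
            constructor
            · intro he
              apply Fin.ext
              simp only [hh0]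
              omega
            · rintro rfl
              simp only [hh0]
              omega
          have hsum : ∑ h : Fin (2^n - 1), (if sset n k t = h.1+1 then epsb (h.1+1) j.1 else 0)
              = epsb (h0.1+1) j.1 := by
            calc ∑ h : Fin (2^n - 1), (if sset n k t = h.1+1 then epsb (h.1+1) j.1 else 0)
                = ∑ h : Fin (2^n - 1), (if h = h0 then epsb (h.1+1) j.1 else 0) := by
                  apply Finset.sum_congr rfl
                  intro h _
                  exact if_congr (hcond h) rfl rfl
              _ = epsb (h0.1+1) j.1 := by
                  rw [Finset.sum_ite_eq' Finset.univ h0 (fun h => epsb (h.1+1) j.1)]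
                  simp
          rw [hsum]
          have hh01 : h0.1 + 1 = sset n k t := by
            simp only [hh0]
            omega
          rw [hh01]
          by_cases htk : t ≤ k j
          · have : (sset n k t).testBit j.1 = true := (testBit_sset j.2).mpr htk
            simp [epsb, this, htk]
          · have : (sset n k t).testBit j.1 = false := by
              by_contra hc
              simp only [Bool.not_eq_false] at hc
              exact htk ((testBit_sset j.2).mp hc)
            simp [epsb, this, htk]
  rw [step1, ← Finset.card_filter]
  have : (Finset.Icc 1 (Finset.univ.sup k)).filter (fun t => t ≤ k j)
      = Finset.Icc 1 (k j) := by
    ext t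
    simp only [Finset.mem_filter, Finset.mem_Icc]
    omega
  rw [this, Nat.card_Icc]
  omega

end St11

open St11 in
/-- For `n ≥ 3`, `N = 2^n - 1` and `0 < x < 1`, the sum of `x^{ν₁+⋯+ν_N}` over
tuples `ν ∈ ℤ_{≥0}^N` with `ν_k ν_ℓ = 0` for all pairs `(k,ℓ)` of distinct elements
of `{1,…,N-1}` incomparable for the domination order, equals the sum of
`x^{max_j k_j}` over `n`-tuples of nonnegative integers. -/
theorem statement11 (n : ℕ) (hn : 3 ≤ n) (x : ℝ) (hx0 : 0 < x) (hx1 : x < 1) :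
    ∑' ν : {ν : Fin (2^n - 1) → ℕ //
        ∀ k ℓ : Fin (2^n - 1), k.1 + 1 ≤ 2^n - 2 → ℓ.1 + 1 ≤ 2^n - 2 → k ≠ ℓ →
          ¬ Dom n (k.1+1) (ℓ.1+1) → ¬ Dom n (ℓ.1+1) (k.1+1) → ν k * ν ℓ = 0},
        x ^ (∑ h, ν.1 h) =
      ∑' k : Fin n → ℕ, x ^ (Finset.univ.sup k) := by
  classical
  have hn0 : 0 < n := by omega
  have cond_iff : ∀ ν : Fin (2^n - 1) → ℕ,
      (∀ k ℓ : Fin (2^n - 1), k.1 + 1 ≤ 2^n - 2 → ℓ.1 + 1 ≤ 2^n - 2 → k ≠ ℓ →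
        ¬ Dom n (k.1+1) (ℓ.1+1) → ¬ Dom n (ℓ.1+1) (k.1+1) → ν k * ν ℓ = 0) ↔
      chainS n ν := by
    intro ν
    constructor
    · intro hc h ℓ hh hℓ
      by_cases heq : h = ℓ
      · subst heq; exact Or.inl (dom_refl n _)
      by_contra hnd
      push_neg at hnd
      obtain ⟨hnd1, hnd2⟩ := hnd
      have hpow : 1 ≤ 2^n := Nat.one_le_two_pow
      have hb1 : h.1 + 1 ≤ 2^n - 2 := by
        by_contra hb
        have he : h.1 + 1 = 2^n - 1 := by have := h.2; omega
        exact hnd2 (by rw [he]; exact dom_top n _)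
      have hb2 : ℓ.1 + 1 ≤ 2^n - 2 := by
        by_contra hb
        have he : ℓ.1 + 1 = 2^n - 1 := by have := ℓ.2; omega
        exact hnd1 (by rw [he]; exact dom_top n _)
      exact (Nat.mul_ne_zero hh hℓ) (hc h ℓ hb1 hb2 heq hnd1 hnd2)
    · intro cs h ℓ _ _ hne hnd1 hnd2
      by_contra hc
      have h1 : ν h ≠ 0 := fun hz => hc (by rw [hz, zero_mul])
      have h2 : ν ℓ ≠ 0 := fun hz => hc (by rw [hz, mul_zero])
      rcases cs h ℓ h1 h2 with hd | hd
      · exact hnd1 hd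
      · exact hnd2 hd
  set S := {ν : Fin (2^n - 1) → ℕ //
      ∀ k ℓ : Fin (2^n - 1), k.1 + 1 ≤ 2^n - 2 → ℓ.1 + 1 ≤ 2^n - 2 → k ≠ ℓ →
        ¬ Dom n (k.1+1) (ℓ.1+1) → ¬ Dom n (ℓ.1+1) (k.1+1) → ν k * ν ℓ = 0} with hS
  let F' : S → (Fin n → ℕ) := fun ν => Fm n ν.1
  have hinj : Function.Injective F' := by
    intro a b hab
    apply Subtype.ext
    have ha := (cond_iff a.1).mp a.2
    have hb := (cond_iff b.1).mp b.2
    rw [← Gm_Fm ha, ← Gm_Fm hb]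
    exact congrArg (Gm n) hab
  have hsurj : Function.Surjective F' := by
    intro k
    exact ⟨⟨Gm n k, (cond_iff _).mpr (chain_Gm k)⟩, Fm_Gm hn0 k⟩
  let e : S ≃ (Fin n → ℕ) := Equiv.ofBijective F' ⟨hinj, hsurj⟩
  rw [← Equiv.tsum_eq e (fun k => x ^ (Finset.univ.sup k))]
  apply tsum_congr
  intro ν
  have he : e ν = F' ν := rfl
  have hsup : Finset.univ.sup (F' ν) = ∑ h, ν.1 h := sup_Fm ((cond_iff ν.1).mp ν.2)
  rw [he, hsup]
end

section
/- Let $n \geq 2$. For each prime $p$ and real $s > 1$, the Euler factor $\left(1 - p^{-s}\right)^{2^n} \sum_{k \geq 0} (k+1)^n p^{-ks}$ tends to $1$ as $p \to \infty$ uniformly for $s \geq 1$, and in fact equals $1 + O_n(p^{-2s})$; consequently the infinite product $\prod_p (1 - 1/p)^{2^n} \sum_{k\geq 0} (k+1)^n p^{-k}$ converges to a positive real number. -/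
lemma mySummable (n : ℕ) {x : ℝ} (h0 : 0 ≤ x) (h1 : x < 1) :
    Summable (fun k : ℕ => ((k:ℝ)+1)^n * x^k) := by
  have hg : Summable (fun k : ℕ => (2:ℝ)^n * ((k:ℝ)^n * x^k + x^k)) := by
    refine Summable.mul_left _ (Summable.add ?_ (summable_geometric_of_lt_one h0 h1))
    have := summable_pow_mul_geometric_of_norm_lt_one (R := ℝ) n (r := x) (by
      rwa [Real.norm_eq_abs, abs_of_nonneg h0])
    exact this
  refine Summable.of_nonneg_of_le (fun k => by positivity) (fun k => ?_) hg
  have hxk : (0:ℝ) ≤ x^k := by positivity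
  rcases Nat.eq_zero_or_pos k with hk | hk
  · subst hk; simp
    have h2 : (1:ℝ) ≤ 2^n := one_le_pow₀ (by norm_num)
    have h3 : (0:ℝ) ≤ (0:ℝ)^n := pow_nonneg le_rfl n
    nlinarith
  · have h1k : ((k:ℝ)+1)^n ≤ (2:ℝ)^n * (k:ℝ)^n := by
      rw [← mul_pow]
      refine pow_le_pow_left₀ (by positivity) ?_ n
      have : (1:ℝ) ≤ (k:ℝ) := by exact_mod_cast hk
      linarith
    have : (0:ℝ) ≤ (2:ℝ)^n * x^k := by positivity
    nlinarith [mul_le_mul_of_nonneg_right h1k hxk]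

lemma mySummable3 (n : ℕ) {x : ℝ} (h0 : 0 ≤ x) (h1 : x < 1) :
    Summable (fun k : ℕ => ((k:ℝ)+3)^n * x^k) := by
  refine Summable.of_nonneg_of_le (fun k => by positivity) (fun k => ?_)
    ((mySummable n h0 h1).mul_left ((3:ℝ)^n))
  have hxk : (0:ℝ) ≤ x^k := by positivity
  have h1k : ((k:ℝ)+3)^n ≤ ((3:ℝ)*((k:ℝ)+1))^n := by
    refine pow_le_pow_left₀ (by positivity) (by linarith [Nat.cast_nonneg (α := ℝ) k]) n
  calc ((k:ℝ)+3)^n * x^k ≤ ((3:ℝ)*((k:ℝ)+1))^n * x^k :=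
        mul_le_mul_of_nonneg_right h1k hxk
    _ = (3:ℝ)^n * ((k:ℝ)+1)^n * x^k := by rw [mul_pow]
    _ = (3:ℝ)^n * (((k:ℝ)+1)^n * x^k) := by ring

lemma myPowUpper : ∀ (m : ℕ) (x : ℝ), 0 ≤ x → x ≤ 1 →
    (1-x)^m ≤ 1 - (m:ℝ)*x + (m:ℝ)^2*x^2 := by
  intro m
  induction m with
  | zero => intro x h0 h1; simp
  | succ m ih =>
    intro x h0 h1
    have h := ih x h0 h1
    have h1x : (0:ℝ) ≤ 1 - x := by linarith
    have hmx : (0:ℝ) ≤ (m:ℝ)*x^2 := by positivity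
    have hmx3 : (0:ℝ) ≤ (m:ℝ)^2*x^3 := by positivity
    calc (1-x)^(m+1) = (1-x)^m * (1-x) := by ring
      _ ≤ (1 - (m:ℝ)*x + (m:ℝ)^2*x^2) * (1-x) := mul_le_mul_of_nonneg_right h h1x
      _ ≤ 1 - (↑(m+1):ℝ)*x + (↑(m+1):ℝ)^2*x^2 := by push_cast; nlinarith [sq_nonneg x]

lemma myBound (n : ℕ) : ∃ C : ℝ, 0 ≤ C ∧ ∀ x : ℝ, 0 < x → x ≤ 1/2 →
    |(1-x)^(2^n) * (∑' k : ℕ, ((k:ℝ)+1)^n * x^k) - 1| ≤ C * x^2 := by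
  set m : ℕ := 2^n with hm
  set A0 : ℝ := ∑' k : ℕ, ((k:ℝ)+1)^n * (1/2:ℝ)^k with hA0def
  set A2 : ℝ := ∑' k : ℕ, ((k:ℝ)+3)^n * (1/2:ℝ)^k with hA2def
  have hA0sum := mySummable n (by norm_num : (0:ℝ) ≤ 1/2) (by norm_num)
  have hA2sum := mySummable3 n (by norm_num : (0:ℝ) ≤ 1/2) (by norm_num)
  have hA0 : 0 ≤ A0 := tsum_nonneg (fun k => by positivity)
  have hA2 : 0 ≤ A2 := tsum_nonneg (fun k => by positivity)
  have hm1 : (1:ℝ) ≤ (m:ℝ) := by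
    have : 1 ≤ m := Nat.one_le_two_pow
    exact_mod_cast this
  refine ⟨(m:ℝ)^2 + (m:ℝ)*A2 + (m:ℝ)^2*A0, by positivity, fun x hx0 hx12 => ?_⟩
  have hx1 : x < 1 := by linarith
  have hxn : 0 ≤ x := hx0.le
  have hS : Summable (fun k : ℕ => ((k:ℝ)+1)^n * x^k) := mySummable n hxn hx1
  have hT : Summable (fun k : ℕ => ((k:ℝ)+3)^n * x^k) := mySummable3 n hxn hx1
  set S : ℝ := ∑' k : ℕ, ((k:ℝ)+1)^n * x^k with hSdef
  set T : ℝ := ∑' k : ℕ, ((k:ℝ)+3)^n * x^k with hTdef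
  -- decompose S
  have hdecomp : S = 1 + (m:ℝ)*x + x^2*T := by
    rw [hSdef, Summable.tsum_eq_zero_add hS, Summable.tsum_eq_zero_add ((summable_nat_add_iff 1).2 hS)]
    have e1 : ∑' k : ℕ, ((((k:ℕ)+1+1 : ℕ):ℝ)+1)^n * x^((k:ℕ)+1+1)
        = x^2 * T := by
      rw [hTdef, ← tsum_mul_left]
      refine tsum_congr (fun k => ?_)
      push_cast
      ring
    push_cast at e1 ⊢
    rw [e1]
    have : ((1:ℝ)+1)^n = (m:ℝ) := by
      rw [hm]; push_cast; norm_num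
    simp only [pow_zero, pow_one]
    rw [this]
    ring
  have hSle : S ≤ A0 := by
    refine Summable.tsum_le_tsum (fun k => ?_) hS hA0sum
    have := pow_le_pow_left₀ hxn hx12 k
    have h1 : (0:ℝ) ≤ ((k:ℝ)+1)^n := by positivity
    exact mul_le_mul_of_nonneg_left this h1
  have hSnn : 0 ≤ S := tsum_nonneg (fun k => by positivity)
  have hTle : T ≤ A2 := by
    refine Summable.tsum_le_tsum (fun k => ?_) hT hA2sum
    have := pow_le_pow_left₀ hxn hx12 k
    have h1 : (0:ℝ) ≤ ((k:ℝ)+3)^n := by positivity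
    exact mul_le_mul_of_nonneg_left this h1
  have hTnn : 0 ≤ T := tsum_nonneg (fun k => by positivity)
  -- bounds for (1-x)^m
  have hlow : 1 - (m:ℝ)*x ≤ (1-x)^m := by
    have := one_add_mul_le_pow (a := -x) (by linarith) m
    calc 1 - (m:ℝ)*x = 1 + (m:ℝ)*(-x) := by ring
      _ ≤ (1 + -x)^m := this
      _ = (1-x)^m := by ring_nf
  have hup : (1-x)^m ≤ 1 - (m:ℝ)*x + (m:ℝ)^2*x^2 := myPowUpper m x hxn (by linarith)
  set E : ℝ := (1-x)^m - (1 - (m:ℝ)*x) with hEdef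
  have hE : |E| ≤ (m:ℝ)^2*x^2 := by
    rw [abs_le]; constructor
    · have : (0:ℝ) ≤ (m:ℝ)^2*x^2 := by positivity
      rw [hEdef]; linarith
    · rw [hEdef]; linarith
  have h1mx : |1 - (m:ℝ)*x| ≤ (m:ℝ) := by
    rw [abs_le]; constructor
    · nlinarith
    · nlinarith
  have key : (1-x)^m * S - 1
      = -((m:ℝ)^2*x^2) + (1-(m:ℝ)*x)*(x^2*T) + E*S := by
    have h1 : (1-x)^m = (1 - (m:ℝ)*x) + E := by rw [hEdef]; ring
    rw [h1, hdecomp]; ring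
  rw [key]
  calc |-((m:ℝ)^2*x^2) + (1-(m:ℝ)*x)*(x^2*T) + E*S|
      ≤ |-((m:ℝ)^2*x^2)| + |(1-(m:ℝ)*x)*(x^2*T)| + |E*S| := abs_add_three _ _ _
    _ ≤ (m:ℝ)^2*x^2 + (m:ℝ)*(x^2*A2) + ((m:ℝ)^2*x^2)*A0 := by
        gcongr ?_ + ?_ + ?_
        · rw [abs_neg, abs_of_nonneg (by positivity)]
        · rw [abs_mul]
          have h2 : |x^2*T| = x^2*T := abs_of_nonneg (by positivity)
          rw [h2]
          exact mul_le_mul h1mx (by nlinarith) (by positivity) (by linarith)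
        · rw [abs_mul]
          have h2 : |S| = S := abs_of_nonneg hSnn
          rw [h2]
          exact mul_le_mul hE hSle hSnn (by positivity)
    _ = ((m:ℝ)^2 + (m:ℝ)*A2 + (m:ℝ)^2*A0) * x^2 := by ring

lemma myLogBound {y : ℝ} (hy : 1/2 ≤ y) : |Real.log y| ≤ 2*|y-1| := by
  have hy0 : (0:ℝ) < y := by linarith
  rcases le_or_gt 1 y with h1 | h1
  · rw [abs_of_nonneg (Real.log_nonneg h1), abs_of_nonneg (by linarith)]
    have := Real.log_le_sub_one_of_pos hy0
    linarith
  · rw [abs_of_nonpos (Real.log_nonpos hy0.le h1.le), abs_of_nonpos (by linarith)]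
    have h2 := Real.log_le_sub_one_of_pos (inv_pos.2 hy0)
    rw [Real.log_inv] at h2
    have h3 : y⁻¹ - 1 ≤ 2*(1-y) := by
      rw [inv_eq_one_div, div_sub' hy0.ne', div_le_iff₀ hy0]
      nlinarith
    linarith


/-- For `n ≥ 2`: the Euler factor `(1 - p^{-s})^{2^n} ∑_{k≥0} (k+1)^n p^{-ks}` equals
`1 + Oₙ(p^{-2s})` uniformly for `s ≥ 1`, and the infinite product over primes
`∏_p (1 - 1/p)^{2^n} ∑_{k≥0} (k+1)^n p^{-k}` converges to a positive real number. -/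
theorem statement16 (n : ℕ) (hn : 2 ≤ n) :
    (∃ C : ℝ, ∀ p : ℕ, p.Prime → ∀ s : ℝ, 1 ≤ s →
      |(1 - (p : ℝ) ^ (-s)) ^ (2^n) *
          (∑' k : ℕ, ((k : ℝ) + 1) ^ n * ((p : ℝ) ^ (-s)) ^ k) - 1| ≤
        C * (p : ℝ) ^ (-(2 * s))) ∧
    Multipliable (fun p : {p : ℕ // p.Prime} =>
      (1 - 1 / (p.1 : ℝ)) ^ (2^n) * ∑' k : ℕ, ((k : ℝ) + 1) ^ n * (1 / (p.1 : ℝ)) ^ k) ∧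
    0 < ∏' p : {p : ℕ // p.Prime},
      (1 - 1 / (p.1 : ℝ)) ^ (2^n) * ∑' k : ℕ, ((k : ℝ) + 1) ^ n * (1 / (p.1 : ℝ)) ^ k := by
  obtain ⟨C, hC0, hCb⟩ := myBound n
  constructor
  · -- part 1
    refine ⟨C, fun p hp s hs => ?_⟩
    have hp0 : (0:ℝ) < p := by exact_mod_cast hp.pos
    have hp1 : (1:ℝ) ≤ p := by exact_mod_cast hp.one_lt.le
    have hp2 : (2:ℝ) ≤ p := by exact_mod_cast hp.two_le
    set x : ℝ := (p:ℝ)^(-s) with hxdef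
    have hx0 : 0 < x := Real.rpow_pos_of_pos hp0 _
    have hx12 : x ≤ 1/2 := by
      have h1 : x ≤ (p:ℝ)^(-1:ℝ) :=
        Real.rpow_le_rpow_of_exponent_le hp1 (by linarith)
      rw [Real.rpow_neg_one] at h1
      have h2 : (p:ℝ)⁻¹ ≤ (2:ℝ)⁻¹ := by
        exact inv_anti₀ (by norm_num) hp2
      have : ((2:ℝ))⁻¹ = 1/2 := by norm_num
      linarith
    have hxx : x^2 = (p:ℝ)^(-(2*s)) := by
      rw [sq, hxdef, ← Real.rpow_add hp0]
      ring_nf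
    have := hCb x hx0 hx12
    rw [hxx] at this
    exact this
  · -- parts 2 and 3
    set F : {p : ℕ // p.Prime} → ℝ := fun p =>
      (1 - 1 / (p.1 : ℝ)) ^ (2^n) * ∑' k : ℕ, ((k : ℝ) + 1) ^ n * (1 / (p.1 : ℝ)) ^ k
      with hFdef
    have hx : ∀ p : {p : ℕ // p.Prime}, 0 < 1/(p.1:ℝ) ∧ 1/(p.1:ℝ) ≤ 1/2 := by
      intro p
      have hp0 : (0:ℝ) < p.1 := by exact_mod_cast p.2.pos
      have hp2 : (2:ℝ) ≤ p.1 := by exact_mod_cast p.2.two_le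
      constructor
      · positivity
      · rw [div_le_div_iff₀ hp0 (by norm_num)]
        linarith
    have hbnd : ∀ p : {p : ℕ // p.Prime}, |F p - 1| ≤ C * (1/((p.1:ℝ)^2)) := by
      intro p
      have := hCb (1/(p.1:ℝ)) (hx p).1 (hx p).2
      rwa [div_pow, one_pow] at this
    have hFpos : ∀ p : {p : ℕ // p.Prime}, 0 < F p := by
      intro p
      have h1 : (0:ℝ) < 1 - 1/(p.1:ℝ) := by
        have := (hx p).2
        linarith
      have h2 : (1:ℝ) ≤ ∑' k : ℕ, ((k : ℝ) + 1) ^ n * (1 / (p.1 : ℝ)) ^ k := by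
        have hle := Summable.le_tsum (mySummable n (hx p).1.le (by linarith [(hx p).2]))
          0 (fun j _ => by positivity)
        simpa using hle
      rw [hFdef]
      have := pow_pos h1 (2^n)
      nlinarith
    set g : {p : ℕ // p.Prime} → ℝ := fun p => Real.log (F p) with hgdef
    have hsummand : Summable (fun p : {p : ℕ // p.Prime} => 2*C*(1/((p.1:ℝ)^2))) := by
      have h0 : Summable (fun k : ℕ => 1/(k:ℝ)^2) :=
        Real.summable_one_div_nat_pow.mpr one_lt_two
      exact (h0.subtype (setOf Nat.Prime)).mul_left (2*C)
    set N : ℕ := ⌈2*C⌉₊ + 1 with hNdef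
    have hkey : ∀ p : {p : ℕ // p.Prime}, N ≤ p.1 → ‖g p‖ ≤ 2*C*(1/((p.1:ℝ)^2)) := by
      intro p hNp
      have hp1 : (1:ℝ) ≤ p.1 := by exact_mod_cast p.2.one_lt.le
      have hC2 : 2*C ≤ (p.1:ℝ)^2 := by
        have h1 : (2*C : ℝ) ≤ ⌈2*C⌉₊ := Nat.le_ceil _
        have h2 : ((⌈2*C⌉₊ : ℝ)) + 1 ≤ (p.1:ℝ) := by exact_mod_cast hNp
        nlinarith
      have hq : C * (1/((p.1:ℝ)^2)) ≤ 1/2 := by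
        rw [mul_one_div, div_le_div_iff₀ (by positivity) (by norm_num)]
        linarith
      have hf12 : 1/2 ≤ F p := by
        have := (abs_le.1 (hbnd p)).1
        linarith
      have : ‖g p‖ = |Real.log (F p)| := rfl
      rw [this]
      calc |Real.log (F p)| ≤ 2*|F p - 1| := myLogBound hf12
        _ ≤ 2*(C * (1/((p.1:ℝ)^2))) := by
            have := hbnd p
            linarith
        _ = 2*C*(1/((p.1:ℝ)^2)) := by ring
    have hev : ∀ᶠ p in Filter.cofinite, ‖g p‖ ≤ 2*C*(1/((p.1:ℝ)^2)) := by
      rw [Filter.eventually_cofinite]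
      refine Set.Finite.subset
        ((Set.finite_Iio N).preimage
          (Set.injOn_of_injective Subtype.val_injective)) ?_
      intro p hbad
      simp only [Set.mem_preimage, Set.mem_Iio]
      by_contra hN
      exact hbad (hkey p (le_of_not_gt hN))
    have hg : Summable g := Summable.of_norm_bounded_eventually hsummand hev
    have hsum : HasSum g (∑' p, g p) := hg.hasSum
    have hprod : HasProd (Real.exp ∘ g) (Real.exp (∑' p, g p)) := hsum.rexp
    have heq : (Real.exp ∘ g) = F := funext fun p => Real.exp_log (hFpos p)
    rw [heq] at hprod
    refine ⟨hprod.multipliable, ?_⟩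
    rw [hprod.tprod_eq]
    exact Real.exp_pos _
end
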